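/- arXiv:2303.17575 — 3 statements merged into one kernel-verified Lean document; each statement's English description precedes it below -/
import Mathlib

section
/- Let (πₙ : Sₙ(B) → Sₙ₊₁(B))ₙ be a coherent family of sections, i.e., sections of the restriction maps satisfying πₘ ∘ s* = s'* ∘ πₙ for every map s : {1,…,m} → {1,…,n} of index sets (where s' is s shifted to fix the new first variable). Then the set of formulas p(x/𝔠) = { φ(x, c̄) : φ(x, ȳ) ∈ πₙ(tp(c̄/B)), c̄ ∈ 𝔠ⁿ, n > 0 } is a consistent complete global type invariant over B. -/
/-!
STATEMENT 6: Let `(πₙ : Sₙ(B) → Sₙ₊₁(B))ₙ` be a coherent family of sections of the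
restriction maps, i.e. `πₘ ∘ s* = (s[+1])* ∘ πₙ` for every index map
`s : {1,…,m} → {1,…,n}` (where `s[+1]` is `s` shifted to fix the new first variable).
Then the set of formulas
`p(x/M) = { φ(x, c̄) : φ(x, ȳ) ∈ πₙ(tp(c̄/B)), c̄ ∈ Mⁿ }`
is a consistent complete global type invariant over `B`.
-/

open FirstOrder FirstOrder.Language
open FirstOrder FirstOrder.Language

namespace StoneSpace

variable (L : Language) (M : Type*) [L.Structure M]

/-- Two `n`-tuples of a structure have the same complete type over a parameter set `B`
iff they satisfy the same formulas with parameters in `B`. -/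
def typEq (B : Set M) (n : ℕ) (a b : Fin n → M) : Prop :=
  ∀ φ : L.Formula (Fin n ⊕ ↥B),
    φ.Realize (Sum.elim a Subtype.val) ↔ φ.Realize (Sum.elim b Subtype.val)

def typSetoid (B : Set M) (n : ℕ) : Setoid (Fin n → M) :=
  ⟨typEq L M B n,
    ⟨fun _ _ => Iff.rfl, fun h φ => (h φ).symm, fun h h' φ => (h φ).trans (h' φ)⟩⟩

/-- The Stone space of complete `n`-types over `B` (identified, in a monster model,
with the set of types of `n`-tuples of the model). -/
def S (B : Set M) (n : ℕ) : Type _ := Quotient (typSetoid L M B n)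

/-- The complete type of the tuple `a` over `B`. -/
def tp (B : Set M) {n : ℕ} (a : Fin n → M) : S L M B n :=
  Quotient.mk (typSetoid L M B n) a

/-- The basic (cl)open subset of the type space determined by the formula `φ`;
membership in it expresses `φ ∈ p`. -/
def fmlSet (B : Set M) {n : ℕ} (φ : L.Formula (Fin n ⊕ ↥B)) : Set (S L M B n) :=
  fun p => Quotient.lift (fun a => φ.Realize (Sum.elim a Subtype.val))
    (fun a b (h : typEq L M B n a b) => propext (h φ)) p

/-- The Stone topology on the space of `n`-types over `B`, generated by the sets `fmlSet φ`. -/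
instance (B : Set M) (n : ℕ) : TopologicalSpace (S L M B n) :=
  TopologicalSpace.generateFrom (Set.range (fmlSet L M B (n := n)))

/-- The substitution (coordinate-permutation/projection) map between type spaces
induced by a map `s` of index sets. -/
def subst (B : Set M) {m n : ℕ} (s : Fin m → Fin n) : S L M B n → S L M B m :=
  Quotient.map (fun a => a ∘ s)
    (by
      intro a b h ψ
      have := h (ψ.relabel (Sum.map s id))
      rwa [Formula.realize_relabel, Formula.realize_relabel,
        Sum.elim_comp_map, Sum.elim_comp_map, Function.comp_id] at this)

variable {L M}

/-- Formulas over `B` in `n + 1` free variables, with the tuple `c` of elements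
substituted for the last `n` variables: the result is a formula over `M` in one free
variable, i.e., a candidate member of a global `1`-type. -/
def plug1 (B : Set M) {n : ℕ} (ψ : L.Formula (Fin (n + 1) ⊕ ↥B)) (c : Fin n → M) :
    L.Formula (Fin 1 ⊕ M) :=
  ψ.relabel
    (Sum.elim (Fin.cases (Sum.inl 0) (fun j => Sum.inr (c j))) (fun b => Sum.inr b.val))

/-- Same for formulas in `n + 2` free variables: the first two variables remain free. -/
def plug2 (B : Set M) {n : ℕ} (ψ : L.Formula (Fin (n + 2) ⊕ ↥B)) (c : Fin n → M) :
    L.Formula (Fin 2 ⊕ M) :=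
  ψ.relabel
    (Sum.elim
      (Fin.cases (Sum.inl 0) (Fin.cases (Sum.inl 1) (fun j => Sum.inr (c j))))
      (fun b => Sum.inr b.val))

/-- A complete global `k`-type over the model `M` (of the complete theory `Th(M)`): a
finitely satisfiable and complete set of formulas in `k` free variables with parameters
everywhere in `M`. -/
def IsGlobalType (k : ℕ) (p : Set (L.Formula (Fin k ⊕ M))) : Prop :=
  (∀ fs : Finset (L.Formula (Fin k ⊕ M)), ↑fs ⊆ p →
      ∃ c : Fin k → M, ∀ φ ∈ fs, φ.Realize (Sum.elim c id)) ∧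
    (∀ φ : L.Formula (Fin k ⊕ M), φ ∈ p ↔ φ.not ∉ p)

/-- A global `1`-type is invariant over `B` if membership of `φ(x, cc)` depends only on
the type of the parameter tuple `cc` over `B`. -/
def Invariant1 (B : Set M) (p : Set (L.Formula (Fin 1 ⊕ M))) : Prop :=
  ∀ (n : ℕ) (ψ : L.Formula (Fin (n + 1) ⊕ ↥B)) (c c' : Fin n → M),
    typEq L M B n c c' → (plug1 B ψ c ∈ p ↔ plug1 B ψ c' ∈ p)

/-- `c` realizes the restriction of the global type `p` to `B ∪ (range cc)`. -/
def RealizesRes (B : Set M) (p : Set (L.Formula (Fin 1 ⊕ M))) {n : ℕ}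
    (cc : Fin n → M) (c : M) : Prop :=
  ∀ ψ : L.Formula (Fin (n + 1) ⊕ ↥B),
    plug1 B ψ cc ∈ p → ψ.Realize (Sum.elim (Fin.cons c cc) Subtype.val)

/-- The shift `s[+1]` of an index map, fixing the new first variable. -/
def shift {m n : ℕ} (s : Fin m → Fin n) : Fin (m + 1) → Fin (n + 1) :=
  Fin.cases 0 (fun i => (s i).succ)

variable (L M) in
/-- A family of maps `πₙ : Sₙ(B) → Sₙ₊₁(B)` is coherent if it commutes with all
substitution maps. -/
def Coherent (B : Set M) (π : ∀ n, S L M B n → S L M B (n + 1)) : Prop :=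
  ∀ (m n : ℕ) (s : Fin m → Fin n) (r : S L M B n),
    π m (subst L M B s r) = subst L M B (shift s) (π n r)

variable (L M) in
/-- A family of sections of the projections `Sₙ₊₁(B) → Sₙ(B)` forgetting the first
variable. -/
def IsSectionFamily (B : Set M) (π : ∀ n, S L M B n → S L M B (n + 1)) : Prop :=
  ∀ (n : ℕ) (r : S L M B n), subst L M B Fin.succ (π n r) = r

variable (L M) in
/-- The family `π` corresponds to the global type `p`:
`φ(x, ȳ) ∈ πₙ(tp(cc/B))` iff `φ(x, cc) ∈ p`. -/
def Corresponds (B : Set M) (p : Set (L.Formula (Fin 1 ⊕ M)))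
    (π : ∀ n, S L M B n → S L M B (n + 1)) : Prop :=
  ∀ (n : ℕ) (cc : Fin n → M) (ψ : L.Formula (Fin (n + 1) ⊕ ↥B)),
    π n (tp L M B cc) ∈ fmlSet L M B ψ ↔ plug1 B ψ cc ∈ p

end StoneSpace


open FirstOrder FirstOrder.Language FirstOrder.Language.BoundedFormula

namespace MyAux

variable {L : Language} {α β γ : Type*}

/-- Rename free variables of a bounded formula, keeping the bound variables. -/
def ren (f : α → β) {k : ℕ} (φ : L.BoundedFormula α k) : L.BoundedFormula β k :=
  φ.mapTermRel (fun _ t => t.relabel (Sum.map f id)) (fun _ => id) (fun _ => id)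

theorem sumMap_comp (f : α → β) (g : β → γ) (k : ℕ) :
    (Sum.map g (id : Fin k → Fin k)) ∘ (Sum.map f id) = Sum.map (g ∘ f) id := by
  funext x; cases x <;> rfl

theorem ren_ren (f : α → β) (g : β → γ) {k : ℕ} (φ : L.BoundedFormula α k) :
    ren g (ren f φ) = ren (g ∘ f) φ := by
  unfold ren
  rw [mapTermRel_mapTermRel]
  congr 1
  funext n t
  rw [Function.comp_apply, Term.relabel_relabel, sumMap_comp]

theorem ren_id {k : ℕ} (φ : L.BoundedFormula α k) : ren (id : α → α) φ = φ := by
  unfold ren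
  have h : (fun (n : ℕ) (t : L.Term (α ⊕ Fin n)) => t.relabel (Sum.map id id)) =
      fun n => id := by
    funext n t
    rw [Sum.map_id_id, Term.relabel_id]
    rfl
  rw [h, mapTermRel_id_id_id]

theorem relabelAux_inl_comp (f : α → β) (k : ℕ) :
    relabelAux (Sum.inl ∘ f : α → β ⊕ Fin 0) k =
      (Sum.map id (Fin.castLE (Nat.zero_add k).ge)) ∘ Sum.map f id := by
  funext x
  cases x with
  | inl a => simp [relabelAux]
  | inr i =>
    simp only [relabelAux, Function.comp_apply, Sum.map_inr, Equiv.sumAssoc_apply_inr,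
      Sum.map_inl, Sum.map_inr, id_eq]
    refine congrArg Sum.inr (Fin.ext ?_)
    simp

theorem relabel_eq_ren (f : α → β) : ∀ {k : ℕ} (φ : L.BoundedFormula α k),
    BoundedFormula.relabel (Sum.inl ∘ f) φ = (ren f φ).castLE (Nat.zero_add k).ge := by
  intro k φ
  induction φ with
  | falsum => rfl
  | equal t u =>
    simp only [BoundedFormula.relabel, mapTermRel, ren, castLE, relabelAux_inl_comp,
      ← Term.relabel_relabel]
  | rel R ts =>
    simp only [BoundedFormula.relabel, mapTermRel, ren, castLE, relabelAux_inl_comp]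
    congr 1
    funext i
    rw [Function.comp_apply, ← Term.relabel_relabel]
  | imp φ ψ ih1 ih2 =>
    rw [relabel_imp, ih1, ih2]; rfl
  | all φ ih =>
    rw [relabel_all, ih]; rfl

theorem formula_relabel_eq_ren (f : α → β) (φ : L.Formula α) :
    φ.relabel f = ren f φ := by
  have h := relabel_eq_ren (L := L) f (k := 0) φ
  rw [castLE_rfl] at h
  exact h

theorem formula_relabel_relabel (f : α → β) (g : β → γ) (φ : L.Formula α) :
    (φ.relabel f).relabel g = φ.relabel (g ∘ f) := by
  rw [formula_relabel_eq_ren, formula_relabel_eq_ren, formula_relabel_eq_ren, ren_ren]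

theorem formula_relabel_id (φ : L.Formula α) : φ.relabel (id : α → α) = φ := by
  rw [formula_relabel_eq_ren, ren_id]

theorem term_relabel_congr [DecidableEq α] (f g : α → β) {k : ℕ}
    (t : L.Term (α ⊕ Fin k)) (h : ∀ a ∈ t.varFinsetLeft, f a = g a) :
    t.relabel (Sum.map f id) = t.relabel (Sum.map g id) := by
  induction t with
  | var x =>
    cases x with
    | inl a =>
      simp only [Term.relabel, Sum.map_inl]
      rw [h a (by simp)]
    | inr i => rfl
  | func F ts ih =>
    simp only [Term.relabel]
    congr 1
    funext i
    refine ih i fun a ha => h a ?_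
    simp only [Term.varFinsetLeft]
    exact Finset.mem_biUnion.2 ⟨i, Finset.mem_univ i, ha⟩

theorem ren_congr [DecidableEq α] (f g : α → β) : ∀ {k : ℕ} (φ : L.BoundedFormula α k),
    (∀ a ∈ φ.freeVarFinset, f a = g a) → ren f φ = ren g φ := by
  intro k φ
  induction φ with
  | falsum => intro _; rfl
  | equal t u =>
    intro h
    simp only [ren, mapTermRel]
    rw [term_relabel_congr f g t fun a ha => h a (by simp [BoundedFormula.freeVarFinset, ha]),
      term_relabel_congr f g u fun a ha => h a (by simp [BoundedFormula.freeVarFinset, ha])]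
  | rel R ts =>
    intro h
    simp only [ren, mapTermRel]
    congr 1
    funext i
    exact term_relabel_congr f g (ts i) fun a ha => h a (by
      simp only [BoundedFormula.freeVarFinset]
      exact Finset.mem_biUnion.2 ⟨i, Finset.mem_univ i, ha⟩)
  | imp φ ψ ih1 ih2 =>
    intro h
    simp only [ren, mapTermRel] at *
    rw [ih1 fun a ha => h a (by simp [BoundedFormula.freeVarFinset, ha]),
      ih2 fun a ha => h a (by simp [BoundedFormula.freeVarFinset, ha])]
  | all φ ih =>
    intro h
    simp only [ren, mapTermRel] at *
    rw [ih fun a ha => h a (by simpa [BoundedFormula.freeVarFinset] using ha)]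

theorem formula_relabel_congr [DecidableEq α] (f g : α → β) (φ : L.Formula α)
    (h : ∀ a ∈ φ.freeVarFinset, f a = g a) : φ.relabel f = φ.relabel g := by
  rw [formula_relabel_eq_ren, formula_relabel_eq_ren, ren_congr f g φ h]

end MyAux

namespace MyAux2

open StoneSpace MyAux

variable {L : Language} {M : Type*} [L.Structure M] {B : Set M}
variable {π : ∀ n, S L M B n → S L M B (n + 1)}

/-- The relabeling map underlying `plug1`. -/
def pmap (B : Set M) {n : ℕ} (c : Fin n → M) : (Fin (n + 1) ⊕ ↥B) → (Fin 1 ⊕ M) :=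
  Sum.elim (Fin.cases (Sum.inl 0) (fun j => Sum.inr (c j))) (fun b => Sum.inr b.val)

theorem plug1_eq {n : ℕ} (ψ : L.Formula (Fin (n + 1) ⊕ ↥B)) (c : Fin n → M) :
    plug1 B ψ c = ψ.relabel (pmap B c) := rfl

theorem mem_fmlSet_tp {n : ℕ} (ψ : L.Formula (Fin n ⊕ ↥B)) (a : Fin n → M) :
    tp L M B a ∈ fmlSet L M B ψ ↔ ψ.Realize (Sum.elim a Subtype.val) := Iff.rfl

theorem subst_tp {m n : ℕ} (s : Fin m → Fin n) (a : Fin n → M) :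
    subst L M B s (tp L M B a) = tp L M B (a ∘ s) := rfl

theorem mem_fmlSet_subst {m n : ℕ} (s : Fin m → Fin n) (q : S L M B n)
    (ψ : L.Formula (Fin m ⊕ ↥B)) :
    subst L M B s q ∈ fmlSet L M B ψ ↔ q ∈ fmlSet L M B (ψ.relabel (Sum.map s id)) := by
  obtain ⟨a, rfl⟩ := Quotient.exists_rep q
  show ψ.Realize (Sum.elim (a ∘ s) Subtype.val) ↔
    (ψ.relabel (Sum.map s id)).Realize (Sum.elim a Subtype.val)
  rw [Formula.realize_relabel, Sum.elim_comp_map, Function.comp_id]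

theorem realize_plug1 {n : ℕ} (ψ : L.Formula (Fin (n + 1) ⊕ ↥B)) (c : Fin n → M)
    (x : M) :
    (plug1 B ψ c).Realize (Sum.elim (fun _ => x) id) ↔
      ψ.Realize (Sum.elim (Fin.cons x c) Subtype.val) := by
  rw [plug1_eq, Formula.realize_relabel]
  apply Iff.of_eq
  congr 1
  funext x
  rcases x with y | b
  · refine Fin.cases ?_ (fun j => ?_) y <;> simp [pmap, Fin.eq_zero]
  · simp [pmap]

theorem plug1_relabel {n N : ℕ} (s : Fin n → Fin N) (ψ : L.Formula (Fin (n + 1) ⊕ ↥B))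
    (dd : Fin N → M) :
    plug1 B (ψ.relabel (Sum.map (shift s) id)) dd = plug1 B ψ (dd ∘ s) := by
  rw [plug1_eq, plug1_eq, formula_relabel_relabel]
  congr 1
  funext x
  rcases x with y | b
  · refine Fin.cases ?_ (fun j => ?_) y <;> simp [pmap, shift]
  · rfl

theorem realize_shift_relabel {n N : ℕ} (s : Fin n → Fin N)
    (ψ : L.Formula (Fin (n + 1) ⊕ ↥B)) (dd : Fin N → M) (x : M) :
    (ψ.relabel (Sum.map (shift s) id)).Realize (Sum.elim (Fin.cons x dd) Subtype.val) ↔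
      ψ.Realize (Sum.elim (Fin.cons x (dd ∘ s)) Subtype.val) := by
  rw [Formula.realize_relabel]
  apply Iff.of_eq
  congr 1
  funext y
  rcases y with y | b
  · refine Fin.cases ?_ (fun j => ?_) y <;> simp [shift]
  · rfl

/-- The quantification pattern sending the first variable to the quantified side. -/
def qmap (N : ℕ) (B : Set M) : (Fin (N + 1) ⊕ ↥B) → ((Fin N ⊕ ↥B) ⊕ Fin 1) :=
  Sum.elim (Fin.cases (Sum.inr 0) (fun j => Sum.inl (Sum.inl j))) (fun b => Sum.inl (Sum.inr b))

theorem qmap_eval (N : ℕ) (e : Fin N → M) (i : Fin 1 → M) :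
    (fun a => Sum.elim (Sum.elim e Subtype.val) i (qmap N B a)) =
      Sum.elim (Fin.cons (i 0) e) Subtype.val := by
  funext y
  rcases y with y | b
  · refine Fin.cases ?_ (fun j => ?_) y <;> simp [qmap]
  · simp [qmap]

theorem transfer_ex {N : ℕ} {dd dd' : Fin N → M} (h : typEq L M B N dd' dd)
    (σ : L.Formula (Fin (N + 1) ⊕ ↥B)) (x' : M)
    (hx : σ.Realize (Sum.elim (Fin.cons x' dd') Subtype.val)) :
    ∃ x : M, σ.Realize (Sum.elim (Fin.cons x dd) Subtype.val) := by
  have h1 : ((σ.relabel (qmap N B)).iExs (Fin 1)).Realize (Sum.elim dd' Subtype.val) := by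
    rw [Formula.realize_iExs]
    exact ⟨fun _ => x', by
      rw [Formula.realize_relabel]; simp only [Function.comp_def]; rw [qmap_eval]; exact hx⟩
  have h2 := (h ((σ.relabel (qmap N B)).iExs (Fin 1))).1 h1
  rw [Formula.realize_iExs] at h2
  simp only [Formula.realize_relabel, Function.comp_def] at h2
  obtain ⟨i, hi⟩ := h2
  rw [qmap_eval] at hi
  exact ⟨i 0, hi⟩

theorem transfer_all {N : ℕ} {dd dd' : Fin N → M} (h : typEq L M B N dd dd')
    (σ : L.Formula (Fin (N + 1) ⊕ ↥B))
    (hσ : ∀ x : M, σ.Realize (Sum.elim (Fin.cons x dd) Subtype.val)) :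
    ∀ x : M, σ.Realize (Sum.elim (Fin.cons x dd') Subtype.val) := by
  intro x
  have h1 : ((σ.relabel (qmap N B)).iAlls (Fin 1)).Realize (Sum.elim dd Subtype.val) := by
    rw [Formula.realize_iAlls]
    intro i
    rw [Formula.realize_relabel]; simp only [Function.comp_def]; rw [qmap_eval]
    exact hσ (i 0)
  have h2 := (h ((σ.relabel (qmap N B)).iAlls (Fin 1))).1 h1
  rw [Formula.realize_iAlls] at h2
  simp only [Formula.realize_relabel, Function.comp_def] at h2
  have h3 := h2 (fun _ => x)
  rwa [qmap_eval] at h3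

theorem cons_head_tail {n : ℕ} (a : Fin (n + 1) → M) :
    Fin.cons (a 0) (a ∘ Fin.succ) = a :=
  funext fun x => Fin.cases rfl (fun j => rfl) x

theorem sec_typEq {N : ℕ} {q : S L M B (N + 1)} {dd : Fin N → M} {a : Fin (N + 1) → M}
    (hq : subst L M B Fin.succ q = tp L M B dd) (ha : Quotient.mk _ a = q) :
    typEq L M B N (a ∘ Fin.succ) dd := by
  have h1 : tp L M B (a ∘ Fin.succ) = tp L M B dd := by
    rw [← subst_tp]
    show subst L M B Fin.succ (Quotient.mk _ a) = _
    rw [ha]; exact hq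
  exact Quotient.exact h1

theorem core_iff {N : ℕ} (q : S L M B (N + 1)) (dd : Fin N → M)
    (hq : subst L M B Fin.succ q = tp L M B dd)
    (α β : L.Formula (Fin (N + 1) ⊕ ↥B))
    (hab : ∀ x : M, (α.Realize (Sum.elim (Fin.cons x dd) Subtype.val) ↔
      β.Realize (Sum.elim (Fin.cons x dd) Subtype.val))) :
    (q ∈ fmlSet L M B α ↔ q ∈ fmlSet L M B β) := by
  obtain ⟨a, rfl⟩ := Quotient.exists_rep q
  have heq : typEq L M B N dd (a ∘ Fin.succ) := fun φ => (sec_typEq hq rfl φ).symm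
  have hσ : ∀ x : M, (α.iff β).Realize (Sum.elim (Fin.cons x dd) Subtype.val) := by
    intro x
    rw [Formula.realize_iff]
    exact hab x
  have h2 := transfer_all heq (α.iff β) hσ (a 0)
  rw [cons_head_tail] at h2
  rw [Formula.realize_iff] at h2
  exact h2

theorem reduce (hcoh : Coherent L M B π) {n N : ℕ} (s : Fin n → Fin N) (dd : Fin N → M)
    (ψ : L.Formula (Fin (n + 1) ⊕ ↥B)) :
    π n (tp L M B (dd ∘ s)) ∈ fmlSet L M B ψ ↔
      π N (tp L M B dd) ∈ fmlSet L M B (ψ.relabel (Sum.map (shift s) id)) := by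
  rw [← subst_tp s dd, hcoh n N s (tp L M B dd), mem_fmlSet_subst]

/-- The candidate global type. -/
def Pset (B : Set M) (π : ∀ n, S L M B n → S L M B (n + 1)) : Set (L.Formula (Fin 1 ⊕ M)) :=
  {φ | ∃ (n : ℕ) (cc : Fin n → M) (ψ : L.Formula (Fin (n + 1) ⊕ ↥B)),
    φ = plug1 B ψ cc ∧ π n (tp L M B cc) ∈ fmlSet L M B ψ}

theorem mem_Pset (hcoh : Coherent L M B π) (hsec : IsSectionFamily L M B π)
    {n : ℕ} (cc : Fin n → M) (ψ : L.Formula (Fin (n + 1) ⊕ ↥B)) :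
    plug1 B ψ cc ∈ Pset B π ↔ π n (tp L M B cc) ∈ fmlSet L M B ψ := by
  constructor
  · rintro ⟨n', cc', ψ', heq, h'⟩
    set N := n' + n with hN
    set dd := Fin.append cc' cc with hdd
    have hc1 : dd ∘ Fin.castAdd n = cc' := funext fun i => Fin.append_left _ _ i
    have hc2 : dd ∘ Fin.natAdd n' = cc := funext fun i => Fin.append_right _ _ i
    rw [← hc1] at heq h'
    rw [← hc2] at heq ⊢
    rw [reduce hcoh] at h' ⊢
    refine (core_iff (π N (tp L M B dd)) dd (hsec N (tp L M B dd)) _ _ ?_).2 h'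
    intro x
    rw [realize_shift_relabel, realize_shift_relabel, ← realize_plug1 ψ (dd ∘ Fin.natAdd n') x,
      ← realize_plug1 ψ' (dd ∘ Fin.castAdd n) x, heq]
  · intro h
    exact ⟨n, cc, ψ, rfl, h⟩

end MyAux2

namespace MyAux2

open StoneSpace MyAux

variable {L : Language} {M : Type*} [L.Structure M] {B : Set M}
variable {π : ∀ n, S L M B n → S L M B (n + 1)}

theorem plug1_not {n : ℕ} (ψ : L.Formula (Fin (n + 1) ⊕ ↥B)) (c : Fin n → M) :
    plug1 B ψ.not c = (plug1 B ψ c).not := rfl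

/-- Conjunction of formulas, unfolded to `imp`/`not` so that it commutes with `relabel`
definitionally. -/
def conj {α : Type*} (φ ψ : L.Formula α) : L.Formula α := (φ.imp ψ.not).not

theorem plug1_conj {n : ℕ} (α' β' : L.Formula (Fin (n + 1) ⊕ ↥B)) (c : Fin n → M) :
    plug1 B (conj α' β') c = conj (plug1 B α' c) (plug1 B β' c) := rfl

theorem realize_conj {α : Type*} (φ ψ : L.Formula α) (v : α → M) :
    (conj φ ψ).Realize v ↔ φ.Realize v ∧ ψ.Realize v := by
  simp only [conj, Formula.realize_not, Formula.realize_imp]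
  tauto

theorem mem_fmlSet_conj {n : ℕ} (α' β' : L.Formula (Fin n ⊕ ↥B)) (q : S L M B n) :
    q ∈ fmlSet L M B (conj α' β') ↔ q ∈ fmlSet L M B α' ∧ q ∈ fmlSet L M B β' := by
  obtain ⟨a, rfl⟩ := Quotient.exists_rep q
  exact realize_conj α' β' (Sum.elim a Subtype.val)

theorem Pset_conj (hcoh : Coherent L M B π) {φ₁ φ₂ : L.Formula (Fin 1 ⊕ M)}
    (h1 : φ₁ ∈ Pset B π) (h2 : φ₂ ∈ Pset B π) : conj φ₁ φ₂ ∈ Pset B π := by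
  obtain ⟨n₁, c₁, ψ₁, rfl, m₁⟩ := h1
  obtain ⟨n₂, c₂, ψ₂, rfl, m₂⟩ := h2
  set dd := Fin.append c₁ c₂ with hdd
  have hc1 : dd ∘ Fin.castAdd n₂ = c₁ := funext fun i => Fin.append_left _ _ i
  have hc2 : dd ∘ Fin.natAdd n₁ = c₂ := funext fun i => Fin.append_right _ _ i
  rw [← hc1] at m₁ ⊢
  rw [← hc2] at m₂ ⊢
  rw [reduce hcoh] at m₁ m₂
  refine ⟨n₁ + n₂, dd,
    conj (ψ₁.relabel (Sum.map (shift (Fin.castAdd n₂)) id))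
      (ψ₂.relabel (Sum.map (shift (Fin.natAdd n₁)) id)), ?_, ?_⟩
  · rw [plug1_conj, plug1_relabel, plug1_relabel]
  · rw [mem_fmlSet_conj]
    exact ⟨m₁, m₂⟩

theorem Pset_realizable (hsec : IsSectionFamily L M B π) {φ : L.Formula (Fin 1 ⊕ M)}
    (hφ : φ ∈ Pset B π) : ∃ x : M, φ.Realize (Sum.elim (fun _ : Fin 1 => x) id) := by
  obtain ⟨n, cc, ψ, rfl, h⟩ := hφ
  obtain ⟨a, ha⟩ := Quotient.exists_rep (π n (tp L M B cc))
  have hmem : ψ.Realize (Sum.elim a Subtype.val) := by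
    rw [← ha] at h
    exact h
  have heq : typEq L M B n (a ∘ Fin.succ) cc := sec_typEq (hsec n (tp L M B cc)) ha
  have h1 : ψ.Realize (Sum.elim (Fin.cons (a 0) (a ∘ Fin.succ)) Subtype.val) := by
    rw [cons_head_tail]
    exact hmem
  obtain ⟨x, hx⟩ := transfer_ex heq ψ (a 0) h1
  exact ⟨x, (realize_plug1 ψ cc x).2 hx⟩

/-- A member of `Pset` that is always in it: `¬⊥` with no parameters. -/
theorem Pset_top (hsec : IsSectionFamily L M B π) :
    plug1 B (BoundedFormula.falsum.not) (fun i : Fin 0 => i.elim0) ∈ Pset B π := by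
  refine ⟨0, fun i => i.elim0, BoundedFormula.falsum.not, rfl, ?_⟩
  obtain ⟨a, ha⟩ := Quotient.exists_rep (π 0 (tp L M B (fun i : Fin 0 => i.elim0)))
  rw [← ha]
  show Formula.Realize (L := L) BoundedFormula.falsum.not (Sum.elim a Subtype.val)
  simp only [Formula.Realize, BoundedFormula.realize_not]
  exact fun h => h

theorem repr_exists (B : Set M) (φ : L.Formula (Fin 1 ⊕ M)) :
    ∃ (n : ℕ) (cc : Fin n → M) (ψ : L.Formula (Fin (n + 1) ⊕ ↥B)), φ = plug1 B ψ cc := by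
  classical
  set ms : List M := φ.freeVarFinset.toList.filterMap Sum.getRight? with hms
  set g : Fin 1 ⊕ M → Fin (ms.length + 1) ⊕ ↥B := fun x =>
    match x with
    | Sum.inl _ => Sum.inl 0
    | Sum.inr m =>
      if h : m ∈ ms then Sum.inl (Fin.succ ⟨ms.idxOf m, List.idxOf_lt_length_iff.mpr h⟩)
      else Sum.inl 0
    with hg
  refine ⟨ms.length, fun i => ms.get i, φ.relabel g, ?_⟩
  rw [plug1_eq, formula_relabel_relabel]
  conv_lhs => rw [← formula_relabel_id φ]
  apply formula_relabel_congr
  intro a ha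
  rcases a with i | m
  · show Sum.inl i = pmap B (fun i => ms.get i) (g (Sum.inl i))
    rw [Fin.eq_zero i]
    rfl
  · have hm : m ∈ ms := by
      rw [hms]
      exact List.mem_filterMap.2 ⟨Sum.inr m, Finset.mem_toList.2 ha, rfl⟩
    show Sum.inr m = pmap B (fun i => ms.get i) (g (Sum.inr m))
    have : g (Sum.inr m) =
        Sum.inl (Fin.succ ⟨ms.idxOf m, List.idxOf_lt_length_iff.mpr hm⟩) := by
      rw [hg]
      exact dif_pos hm
    rw [this]
    show Sum.inr m = pmap B (fun i => ms.get i)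
      (Sum.inl (Fin.succ ⟨ms.idxOf m, List.idxOf_lt_length_iff.mpr hm⟩))
    have hpm : pmap B (fun i => ms.get i)
        (Sum.inl (Fin.succ ⟨ms.idxOf m, List.idxOf_lt_length_iff.mpr hm⟩)) =
        Sum.inr (ms.get ⟨ms.idxOf m, List.idxOf_lt_length_iff.mpr hm⟩) := by
      simp [pmap]
    rw [hpm, List.get_eq_getElem, List.getElem_idxOf]

end MyAux2


open StoneSpace in
theorem coherent_sections_give_invariant_global_type
    (L : Language) (M : Type*) [L.Structure M] (B : Set M)
    (π : ∀ n, S L M B n → S L M B (n + 1))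
    (hcoh : Coherent L M B π) (hsec : IsSectionFamily L M B π) :
    IsGlobalType 1
        {φ : L.Formula (Fin 1 ⊕ M) | ∃ (n : ℕ) (cc : Fin n → M)
          (ψ : L.Formula (Fin (n + 1) ⊕ ↥B)),
            φ = plug1 B ψ cc ∧ π n (tp L M B cc) ∈ fmlSet L M B ψ} ∧
      Invariant1 B
        {φ : L.Formula (Fin 1 ⊕ M) | ∃ (n : ℕ) (cc : Fin n → M)
          (ψ : L.Formula (Fin (n + 1) ⊕ ↥B)),
            φ = plug1 B ψ cc ∧ π n (tp L M B cc) ∈ fmlSet L M B ψ} := by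
  classical
  refine ⟨⟨?_, ?_⟩, ?_⟩
  · -- finite satisfiability
    intro fs hfs
    have hfs' : ↑fs ⊆ MyAux2.Pset B π := hfs
    have key : ∀ t : Finset (L.Formula (Fin 1 ⊕ M)), ↑t ⊆ MyAux2.Pset B π →
        ∃ Φ ∈ MyAux2.Pset B π, ∀ v : Fin 1 → M, Φ.Realize (Sum.elim v id) →
          ∀ φ ∈ t, φ.Realize (Sum.elim v id) := by
      intro t
      induction t using Finset.induction_on with
      | empty =>
        intro _
        exact ⟨_, MyAux2.Pset_top hsec, fun v _ φ h => (Finset.notMem_empty φ h).elim⟩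
      | @insert φ t hφt ih =>
        intro hsub
        obtain ⟨Φ, hΦ, hΦr⟩ := ih (fun x hx => hsub (Finset.mem_insert_of_mem hx))
        have hφ : φ ∈ MyAux2.Pset B π := hsub (Finset.mem_insert_self _ _)
        refine ⟨MyAux2.conj φ Φ, MyAux2.Pset_conj hcoh hφ hΦ, ?_⟩
        intro v hv ψ hψ
        rw [MyAux2.realize_conj] at hv
        rcases Finset.mem_insert.1 hψ with rfl | hψ'
        · exact hv.1
        · exact hΦr v hv.2 ψ hψ'
    obtain ⟨Φ, hΦ, hΦr⟩ := key fs hfs'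
    obtain ⟨x, hx⟩ := MyAux2.Pset_realizable hsec hΦ
    exact ⟨fun _ => x, fun φ hφ => hΦr (fun _ => x) hx φ hφ⟩
  · -- completeness
    intro φ
    obtain ⟨n, cc, ψ, rfl⟩ := MyAux2.repr_exists B φ
    obtain ⟨a, ha⟩ := Quotient.exists_rep (π n (tp L M B cc))
    have h1 : (plug1 B ψ cc ∈ MyAux2.Pset B π) ↔ ψ.Realize (Sum.elim a Subtype.val) := by
      have h := MyAux2.mem_Pset (π := π) hcoh hsec cc ψ
      rw [← ha] at h
      exact h
    have h2 : ((plug1 B ψ cc).not ∈ MyAux2.Pset B π) ↔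
        ¬ ψ.Realize (Sum.elim a Subtype.val) := by
      have h := MyAux2.mem_Pset (π := π) hcoh hsec cc ψ.not
      rw [← ha] at h
      rw [← MyAux2.plug1_not, h]
      show Formula.Realize ψ.not (Sum.elim a Subtype.val) ↔ _
      exact Formula.realize_not
    show (plug1 B ψ cc ∈ MyAux2.Pset B π) ↔ (plug1 B ψ cc).not ∉ MyAux2.Pset B π
    rw [h1, h2]
    exact not_not.symm
  · -- invariance
    intro n ψ c c' h
    show (plug1 B ψ c ∈ MyAux2.Pset B π) ↔ (plug1 B ψ c' ∈ MyAux2.Pset B π)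
    rw [MyAux2.mem_Pset hcoh hsec, MyAux2.mem_Pset hcoh hsec]
    have : tp L M B c = tp L M B c' := Quotient.sound h
    rw [this]
end

section
/- There is a bijection between global types p(x) ∈ S₁(𝔠) invariant over B and coherent families of (not necessarily continuous) sections πₙ : Sₙ(B) → Sₙ₊₁(B) of the restriction maps; equivalently, sections in simplicial sets of the natural transformation pr : S_•(B) ∘ [+1] → S_•(B). -/
/-!
STATEMENT 7: There is a bijection between global types `p(x) ∈ S₁(M)` invariant over
`B` and coherent families of (not necessarily continuous) sections
`πₙ : Sₙ(B) → Sₙ₊₁(B)` of the restriction maps (equivalently, sections in simplicial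
sets of the décalage projection `S_•(B) ∘ [+1] → S_•(B)`).  The bijection sends `p` to
the family `r ↦ p ⊗ r`, which is characterized by:
`φ(x, ȳ) ∈ πₙ(tp(c̄/B)) ↔ φ(x, c̄) ∈ p` (the predicate `Corresponds`).
The monster-model hypothesis (every restriction `p ↾ B c̄` of an invariant global type
is realized) is `hreal`.
-/

open FirstOrder FirstOrder.Language
open FirstOrder FirstOrder.Language

section Aux

open StoneSpace

variable {L : Language} {M : Type*} [L.Structure M] {B : Set M}

lemma tp_sound {n : ℕ} {a b : Fin n → M} (h : typEq L M B n a b) :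
    tp L M B a = tp L M B b := Quotient.sound h

lemma mem_fmlSet_tp {n : ℕ} (ψ : L.Formula (Fin n ⊕ ↥B)) (a : Fin n → M) :
    tp L M B a ∈ fmlSet L M B ψ ↔ ψ.Realize (Sum.elim a Subtype.val) := Iff.rfl

lemma subst_tp {m n : ℕ} (s : Fin m → Fin n) (a : Fin n → M) :
    subst L M B s (tp L M B a) = tp L M B (a ∘ s) := rfl

lemma S_ext {n : ℕ} {q q' : S L M B n}
    (h : ∀ ψ : L.Formula (Fin n ⊕ ↥B), q ∈ fmlSet L M B ψ ↔ q' ∈ fmlSet L M B ψ) :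
    q = q' := by
  obtain ⟨a, rfl⟩ : ∃ a, tp L M B a = q := Quotient.exists_rep q
  obtain ⟨b, rfl⟩ : ∃ b, tp L M B b = q' := Quotient.exists_rep q'
  exact Quotient.sound fun ψ => h ψ

lemma subst_mem_fmlSet {m n : ℕ} (s : Fin m → Fin n) (q : S L M B n)
    (ψ : L.Formula (Fin m ⊕ ↥B)) :
    subst L M B s q ∈ fmlSet L M B ψ ↔ q ∈ fmlSet L M B (ψ.relabel (Sum.map s id)) := by
  obtain ⟨a, rfl⟩ : ∃ a, tp L M B a = q := Quotient.exists_rep q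
  rw [subst_tp, mem_fmlSet_tp, mem_fmlSet_tp, Formula.realize_relabel, Sum.elim_comp_map,
    Function.comp_id]

lemma realize_plug1 {n : ℕ} (ψ : L.Formula (Fin (n + 1) ⊕ ↥B)) (cc : Fin n → M)
    (v : Fin 1 ⊕ M → M) :
    (plug1 B ψ cc).Realize v ↔
      ψ.Realize (Sum.elim
        (Fin.cons (v (Sum.inl 0)) fun j => v (Sum.inr (cc j))) fun b => v (Sum.inr b.val)) := by
  rw [plug1, Formula.realize_relabel]
  apply iff_of_eq; congr 1
  funext z
  rcases z with i | b
  · refine Fin.cases ?_ (fun j => ?_) i <;> simp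
  · rfl

lemma plug1_not {n : ℕ} (ψ : L.Formula (Fin (n + 1) ⊕ ↥B)) (cc : Fin n → M) :
    plug1 B ψ.not cc = (plug1 B ψ cc).not :=
  BoundedFormula.relabel_not _ _

lemma mem_iff_of_realize_iff {k : ℕ} {p : Set (L.Formula (Fin k ⊕ M))}
    (hp : IsGlobalType k p) {φ φ' : L.Formula (Fin k ⊕ M)}
    (h : ∀ c : Fin k → M, φ.Realize (Sum.elim c id) ↔ φ'.Realize (Sum.elim c id)) :
    φ ∈ p ↔ φ' ∈ p := by
  classical
  have key : ∀ χ χ' : L.Formula (Fin k ⊕ M),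
      (∀ c : Fin k → M, χ.Realize (Sum.elim c id) ↔ χ'.Realize (Sum.elim c id)) →
        χ ∈ p → χ' ∈ p := by
    intro χ χ' hiff hχ
    by_contra hn
    have hnot : χ'.not ∈ p := by
      by_contra hnn
      exact hn ((hp.2 χ').mpr hnn)
    obtain ⟨c, hc⟩ := hp.1 {χ, χ'.not} (by
      intro x hx
      simp only [Finset.coe_insert, Finset.coe_singleton, Set.mem_insert_iff,
        Set.mem_singleton_iff] at hx
      rcases hx with rfl | rfl
      · exact hχ
      · exact hnot)
    have h1 := hc χ (Finset.mem_insert_self _ _)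
    have h2 := hc χ'.not (Finset.mem_insert_of_mem (Finset.mem_singleton_self _))
    rw [Formula.realize_not] at h2
    exact h2 ((hiff c).mp h1)
  exact ⟨key _ _ h, key _ _ fun c => (h c).symm⟩

lemma exists_plug1_repr (B : Set M) (φ : L.Formula (Fin 1 ⊕ M)) :
    ∃ (n : ℕ) (cc : Fin n → M) (ψ : L.Formula (Fin (n + 1) ⊕ ↥B)),
      ∀ v : Fin 1 ⊕ M → M, (plug1 B ψ cc).Realize v ↔ φ.Realize v := by
  classical
  set fv := BoundedFormula.freeVarFinset φ with hfv
  let φ₀ : L.Formula ↥(↑fv : Set (Fin 1 ⊕ M)) :=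
    BoundedFormula.restrictFreeVar φ (Set.inclusion subset_rfl)
  let t : Finset M := fv.preimage Sum.inr Sum.inr_injective.injOn
  let e := t.equivFin
  let cc : Fin t.card → M := fun j => (e.symm j : M)
  have hmem : ∀ m : M, Sum.inr m ∈ (↑fv : Set (Fin 1 ⊕ M)) → m ∈ t := fun m hm =>
    Finset.mem_preimage.mpr hm
  let g : ↥(↑fv : Set (Fin 1 ⊕ M)) → Fin (t.card + 1) ⊕ ↥B := fun x =>
    match x with
    | ⟨Sum.inl _, _⟩ => Sum.inl 0
    | ⟨Sum.inr m, hm⟩ => Sum.inl (Fin.succ (e ⟨m, hmem m hm⟩))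
  refine ⟨t.card, cc, Formula.relabel g φ₀, ?_⟩
  intro v
  rw [realize_plug1, Formula.realize_relabel]
  have hcomp :
      (Sum.elim (Fin.cons (v (Sum.inl 0)) fun j => v (Sum.inr (cc j)))
        (fun b : ↥B => v (Sum.inr b.val))) ∘ g = v ∘ (↑) := by
    funext x
    rcases x with ⟨z, hz⟩
    rcases z with i | m
    · simp only [Function.comp_apply, g]
      rw [Subsingleton.elim i 0]
      simp
    · simp only [Function.comp_apply, g]
      simp [cc]
  rw [hcomp]
  exact BoundedFormula.realize_restrictFreeVar' subset_rfl


set_option linter.unusedSectionVars false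

lemma realize_plug1_id {n : ℕ} (ψ : L.Formula (Fin (n + 1) ⊕ ↥B)) (cc : Fin n → M) (x : M) :
    (plug1 B ψ cc).Realize (Sum.elim (fun _ : Fin 1 => x) id) ↔
      ψ.Realize (Sum.elim (Fin.cons x cc) Subtype.val) := by
  rw [realize_plug1]
  apply iff_of_eq; congr 1

lemma cons_comp_shift {m n : ℕ} (x : M) (cc : Fin n → M) (s : Fin m → Fin n) :
    Fin.cons x cc ∘ shift s = Fin.cons x (cc ∘ s) := by
  funext i
  refine Fin.cases ?_ (fun j => ?_) i <;> simp [shift]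

lemma plug1_shift_realize {m n : ℕ} (ψ : L.Formula (Fin (m + 1) ⊕ ↥B)) (s : Fin m → Fin n)
    (cc : Fin n → M) (v : Fin 1 ⊕ M → M) :
    (plug1 B (ψ.relabel (Sum.map (shift s) id)) cc).Realize v ↔
      (plug1 B ψ (cc ∘ s)).Realize v := by
  rw [realize_plug1, realize_plug1, Formula.realize_relabel]
  apply iff_of_eq; congr 1
  funext z
  rcases z with i | b
  · refine Fin.cases ?_ (fun j => ?_) i <;> simp [shift]
  · rfl

lemma plug1_inf_realize {n : ℕ} (ψ θ : L.Formula (Fin (n + 1) ⊕ ↥B)) (cc : Fin n → M)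
    (v : Fin 1 ⊕ M → M) :
    (plug1 B (ψ ⊓ θ) cc).Realize v ↔
      (plug1 B ψ cc).Realize v ∧ (plug1 B θ cc).Realize v := by
  rw [realize_plug1, realize_plug1, realize_plug1, Formula.realize_inf]

lemma fmlSet_inf {n : ℕ} (q : S L M B n) (ψ θ : L.Formula (Fin n ⊕ ↥B)) :
    q ∈ fmlSet L M B (ψ ⊓ θ) ↔ q ∈ fmlSet L M B ψ ∧ q ∈ fmlSet L M B θ := by
  obtain ⟨a, rfl⟩ : ∃ a, tp L M B a = q := Quotient.exists_rep q
  exact Formula.realize_inf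

lemma fmlSet_not {n : ℕ} (q : S L M B n) (ψ : L.Formula (Fin n ⊕ ↥B)) :
    q ∈ fmlSet L M B ψ.not ↔ q ∉ fmlSet L M B ψ := by
  obtain ⟨a, rfl⟩ : ∃ a, tp L M B a = q := Quotient.exists_rep q
  exact Formula.realize_not

lemma fmlSet_top {n : ℕ} (q : S L M B n) : q ∈ fmlSet L M B (⊤ : L.Formula (Fin n ⊕ ↥B)) := by
  obtain ⟨a, rfl⟩ : ∃ a, tp L M B a = q := Quotient.exists_rep q
  exact Formula.realize_top.mpr trivial

/-- The variable relabeling used to quantify out the first variable. -/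
def gmap (B : Set M) (n : ℕ) : (Fin (n + 1) ⊕ ↥B) → (Fin n ⊕ ↥B) ⊕ Fin 1 :=
  Sum.elim (Fin.cases (Sum.inr 0) fun j => Sum.inl (Sum.inl j)) fun b => Sum.inl (Sum.inr b)

lemma relabel_g_realize {n : ℕ} (δ : L.Formula (Fin (n + 1) ⊕ ↥B)) (d : Fin n → M)
    (xs : Fin 1 → M) :
    (BoundedFormula.relabel (gmap B n) δ).Realize (Sum.elim d Subtype.val) xs ↔
      δ.Realize (Sum.elim (Fin.cons (xs 0) d) Subtype.val) := by
  rw [BoundedFormula.realize_relabel]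
  have h1 : (Sum.elim (Sum.elim d Subtype.val) (xs ∘ Fin.castAdd 0) ∘ gmap B n) =
      Sum.elim (Fin.cons (xs 0) d) Subtype.val := by
    funext z
    rcases z with i | b
    · refine Fin.cases ?_ (fun j => ?_) i <;> simp [gmap]
    · simp [gmap]
  rw [h1, Subsingleton.elim (xs ∘ Fin.natAdd 1) (default : Fin 0 → M)]
  rfl

/-- Existential quantification of the first variable, as a formula in `n` variables. -/
def exFml {n : ℕ} (ψ : L.Formula (Fin (n + 1) ⊕ ↥B)) : L.Formula (Fin n ⊕ ↥B) :=
  (BoundedFormula.relabel (gmap B n) ψ).ex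

lemma realize_exFml {n : ℕ} (ψ : L.Formula (Fin (n + 1) ⊕ ↥B)) (d : Fin n → M) :
    (exFml ψ).Realize (Sum.elim d Subtype.val) ↔
      ∃ x : M, ψ.Realize (Sum.elim (Fin.cons x d) Subtype.val) := by
  have h0 : (exFml ψ).Realize (Sum.elim d Subtype.val) ↔
      BoundedFormula.Realize (BoundedFormula.relabel (gmap B n) ψ).ex
        (Sum.elim d Subtype.val) default := Iff.rfl
  rw [h0, BoundedFormula.realize_ex]
  refine exists_congr fun a => ?_
  rw [relabel_g_realize]
  have hs : (Fin.snoc (default : Fin 0 → M) a : Fin 1 → M) 0 = a := by simp [Fin.snoc]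
  rw [hs]

/-- Universally quantified equivalence of two formulas in the first variable. -/
def allIffFml {n : ℕ} (ψ θ : L.Formula (Fin (n + 1) ⊕ ↥B)) : L.Formula (Fin n ⊕ ↥B) :=
  (BoundedFormula.relabel (gmap B n) (ψ.iff θ)).all

lemma realize_allIffFml {n : ℕ} (ψ θ : L.Formula (Fin (n + 1) ⊕ ↥B)) (d : Fin n → M) :
    (allIffFml ψ θ).Realize (Sum.elim d Subtype.val) ↔
      ∀ x : M, (ψ.Realize (Sum.elim (Fin.cons x d) Subtype.val) ↔
        θ.Realize (Sum.elim (Fin.cons x d) Subtype.val)) := by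
  have h0 : (allIffFml ψ θ).Realize (Sum.elim d Subtype.val) ↔
      BoundedFormula.Realize (BoundedFormula.relabel (gmap B n) (ψ.iff θ)).all
        (Sum.elim d Subtype.val) default := Iff.rfl
  rw [h0, BoundedFormula.realize_all]
  refine forall_congr' fun a => ?_
  rw [relabel_g_realize]
  have hs : (Fin.snoc (default : Fin 0 → M) a : Fin 1 → M) 0 = a := by simp [Fin.snoc]
  rw [hs]
  exact Formula.realize_iff

lemma realize_cons_iff_mem {p : Set (L.Formula (Fin 1 ⊕ M))} (hp : IsGlobalType 1 p)
    {n : ℕ} {cc : Fin n → M} {c : M} (hc : RealizesRes B p cc c)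
    (ψ : L.Formula (Fin (n + 1) ⊕ ↥B)) :
    ψ.Realize (Sum.elim (Fin.cons c cc) Subtype.val) ↔ plug1 B ψ cc ∈ p := by
  constructor
  · intro h
    by_contra hn
    have h1 : (plug1 B ψ cc).not ∈ p := by
      by_contra h2
      exact hn ((hp.2 _).mpr h2)
    rw [← plug1_not] at h1
    have h3 := hc ψ.not h1
    rw [Formula.realize_not] at h3
    exact h3 h
  · exact fun h => hc ψ h

/-- The section family associated to an invariant global type. -/
noncomputable def mkPi (B : Set M) (p : Set (L.Formula (Fin 1 ⊕ M)))
    (hp : IsGlobalType 1 p) (hinv : Invariant1 B p)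
    (hr : ∀ (n : ℕ) (cc : Fin n → M), ∃ c : M, RealizesRes B p cc c) :
    ∀ n, S L M B n → S L M B (n + 1) := fun n =>
  Quotient.map (fun cc => Fin.cons (hr n cc).choose cc) (by
    intro cc cc' h
    show typEq L M B (n + 1) _ _
    intro ψ
    rw [realize_cons_iff_mem hp (hr n cc).choose_spec ψ,
      realize_cons_iff_mem hp (hr n cc').choose_spec ψ]
    exact hinv n ψ cc cc' h)

lemma mkPi_tp {p : Set (L.Formula (Fin 1 ⊕ M))} (hp : IsGlobalType 1 p)
    (hinv : Invariant1 B p)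
    (hr : ∀ (n : ℕ) (cc : Fin n → M), ∃ c : M, RealizesRes B p cc c)
    {n : ℕ} (cc : Fin n → M) :
    mkPi B p hp hinv hr n (tp L M B cc) = tp L M B (Fin.cons (hr n cc).choose cc) := rfl

lemma mkPi_corresponds {p : Set (L.Formula (Fin 1 ⊕ M))} (hp : IsGlobalType 1 p)
    (hinv : Invariant1 B p)
    (hr : ∀ (n : ℕ) (cc : Fin n → M), ∃ c : M, RealizesRes B p cc c) :
    Corresponds L M B p (mkPi B p hp hinv hr) := by
  intro n cc ψ
  rw [mkPi_tp hp hinv hr cc, mem_fmlSet_tp]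
  exact realize_cons_iff_mem hp (hr n cc).choose_spec ψ

lemma mkPi_section {p : Set (L.Formula (Fin 1 ⊕ M))} (hp : IsGlobalType 1 p)
    (hinv : Invariant1 B p)
    (hr : ∀ (n : ℕ) (cc : Fin n → M), ∃ c : M, RealizesRes B p cc c) :
    IsSectionFamily L M B (mkPi B p hp hinv hr) := by
  intro n r
  obtain ⟨cc, rfl⟩ : ∃ cc, tp L M B cc = r := Quotient.exists_rep r
  rw [mkPi_tp hp hinv hr cc, subst_tp]
  exact congrArg (tp L M B) (funext fun i => Fin.cons_succ _ _ _)

lemma mkPi_coherent {p : Set (L.Formula (Fin 1 ⊕ M))} (hp : IsGlobalType 1 p)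
    (hinv : Invariant1 B p)
    (hr : ∀ (n : ℕ) (cc : Fin n → M), ∃ c : M, RealizesRes B p cc c) :
    Coherent L M B (mkPi B p hp hinv hr) := by
  intro m n s r
  obtain ⟨cc, rfl⟩ : ∃ cc, tp L M B cc = r := Quotient.exists_rep r
  rw [subst_tp, mkPi_tp hp hinv hr (cc ∘ s), mkPi_tp hp hinv hr cc, subst_tp,
    cons_comp_shift]
  apply Quotient.sound
  intro ψ
  rw [realize_cons_iff_mem hp (hr m (cc ∘ s)).choose_spec ψ]
  have h2 : ψ.Realize (Sum.elim (Fin.cons (hr n cc).choose (cc ∘ s)) Subtype.val) ↔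
      plug1 B (ψ.relabel (Sum.map (shift s) id)) cc ∈ p := by
    rw [← realize_cons_iff_mem hp (hr n cc).choose_spec (ψ.relabel (Sum.map (shift s) id)),
      Formula.realize_relabel, Sum.elim_comp_map, Function.comp_id, cons_comp_shift]
  rw [h2]
  exact (mem_iff_of_realize_iff hp fun c => (plug1_shift_realize ψ s cc (Sum.elim c id))).symm

lemma pi_mem_subst {π : ∀ n, S L M B n → S L M B (n + 1)} (hcoh : Coherent L M B π)
    {m n : ℕ} (s : Fin m → Fin n) (cc : Fin n → M) (ψ : L.Formula (Fin (m + 1) ⊕ ↥B)) :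
    π m (tp L M B (cc ∘ s)) ∈ fmlSet L M B ψ ↔
      π n (tp L M B cc) ∈ fmlSet L M B (ψ.relabel (Sum.map (shift s) id)) := by
  have h := hcoh m n s (tp L M B cc)
  rw [subst_tp] at h
  rw [h, subst_mem_fmlSet]

lemma pi_mem_congr_same {π : ∀ n, S L M B n → S L M B (n + 1)}
    (hsec : IsSectionFamily L M B π) {n : ℕ} (cc : Fin n → M)
    (ψ θ : L.Formula (Fin (n + 1) ⊕ ↥B))
    (h : ∀ x : M, ψ.Realize (Sum.elim (Fin.cons x cc) Subtype.val) ↔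
      θ.Realize (Sum.elim (Fin.cons x cc) Subtype.val)) :
    (π n (tp L M B cc) ∈ fmlSet L M B ψ ↔ π n (tp L M B cc) ∈ fmlSet L M B θ) := by
  obtain ⟨a, ha⟩ : ∃ a, tp L M B a = π n (tp L M B cc) :=
    Quotient.exists_rep (π n (tp L M B cc))
  have hsec' := hsec n (tp L M B cc)
  rw [← ha, subst_tp] at hsec'
  have htype : typEq L M B n (a ∘ Fin.succ) cc := Quotient.exact hsec'
  have hall : (allIffFml ψ θ).Realize (Sum.elim cc Subtype.val) :=
    (realize_allIffFml ψ θ cc).mpr h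
  have hall2 : (allIffFml ψ θ).Realize (Sum.elim (a ∘ Fin.succ) Subtype.val) :=
    (htype (allIffFml ψ θ)).mpr hall
  rw [realize_allIffFml] at hall2
  have hkey := hall2 (a 0)
  have hconsa : (Fin.cons (a 0) (a ∘ Fin.succ) : Fin (n + 1) → M) = a := by
    funext i
    refine Fin.cases ?_ (fun j => ?_) i
    · exact Fin.cons_zero _ _
    · exact Fin.cons_succ _ _ _
  rw [hconsa] at hkey
  rw [← ha, mem_fmlSet_tp, mem_fmlSet_tp]
  exact hkey

lemma pi_mem_congr {π : ∀ n, S L M B n → S L M B (n + 1)} (hcoh : Coherent L M B π)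
    (hsec : IsSectionFamily L M B π) {n n' : ℕ} (cc : Fin n → M) (cc' : Fin n' → M)
    (ψ : L.Formula (Fin (n + 1) ⊕ ↥B)) (ψ' : L.Formula (Fin (n' + 1) ⊕ ↥B))
    (h : ∀ v : Fin 1 ⊕ M → M, (plug1 B ψ cc).Realize v ↔ (plug1 B ψ' cc').Realize v) :
    (π n (tp L M B cc) ∈ fmlSet L M B ψ ↔ π n' (tp L M B cc') ∈ fmlSet L M B ψ') := by
  have happ1 : Fin.append cc cc' ∘ Fin.castAdd n' = cc :=
    funext fun i => Fin.append_left cc cc' i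
  have happ2 : Fin.append cc cc' ∘ Fin.natAdd n = cc' :=
    funext fun i => Fin.append_right cc cc' i
  calc π n (tp L M B cc) ∈ fmlSet L M B ψ
      ↔ π n (tp L M B (Fin.append cc cc' ∘ Fin.castAdd n')) ∈ fmlSet L M B ψ := by
        rw [happ1]
    _ ↔ π (n + n') (tp L M B (Fin.append cc cc')) ∈
          fmlSet L M B (ψ.relabel (Sum.map (shift (Fin.castAdd n')) id)) :=
        pi_mem_subst hcoh (Fin.castAdd n') (Fin.append cc cc') ψ
    _ ↔ π (n + n') (tp L M B (Fin.append cc cc')) ∈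
          fmlSet L M B (ψ'.relabel (Sum.map (shift (Fin.natAdd n)) id)) := by
        refine pi_mem_congr_same hsec (Fin.append cc cc') _ _ fun x => ?_
        rw [← realize_plug1_id (ψ.relabel (Sum.map (shift (Fin.castAdd n')) id))
            (Fin.append cc cc') x,
          ← realize_plug1_id (ψ'.relabel (Sum.map (shift (Fin.natAdd n)) id))
            (Fin.append cc cc') x,
          plug1_shift_realize, plug1_shift_realize, happ1, happ2]
        exact h _
    _ ↔ π n' (tp L M B (Fin.append cc cc' ∘ Fin.natAdd n)) ∈ fmlSet L M B ψ' :=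
        (pi_mem_subst hcoh (Fin.natAdd n) (Fin.append cc cc') ψ').symm
    _ ↔ π n' (tp L M B cc') ∈ fmlSet L M B ψ' := by rw [happ2]

end Aux

open StoneSpace in
theorem invariant_types_biject_with_coherent_section_families
    (L : Language) (M : Type*) [L.Structure M] (B : Set M)
    (hreal : ∀ (p : Set (L.Formula (Fin 1 ⊕ M))),
      IsGlobalType 1 p → Invariant1 B p →
        ∀ (n : ℕ) (cc : Fin n → M), ∃ c : M, RealizesRes B p cc c) :
    ∃ e : {p : Set (L.Formula (Fin 1 ⊕ M)) // IsGlobalType 1 p ∧ Invariant1 B p} ≃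
        {π : ∀ n, S L M B n → S L M B (n + 1) //
          Coherent L M B π ∧ IsSectionFamily L M B π},
      ∀ p, Corresponds L M B p.val (e p).val := by
  classical
  refine ⟨Equiv.ofBijective
    (fun P => ⟨mkPi B P.1 P.2.1 P.2.2 (hreal P.1 P.2.1 P.2.2),
      mkPi_coherent P.2.1 P.2.2 _, mkPi_section P.2.1 P.2.2 _⟩) ⟨?_, ?_⟩, ?_⟩
  · -- injectivity
    rintro ⟨p, hp, hinv⟩ ⟨p', hp', hinv'⟩ h
    have hπ : mkPi B p hp hinv (hreal p hp hinv) =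
        mkPi B p' hp' hinv' (hreal p' hp' hinv') := congrArg Subtype.val h
    apply Subtype.ext
    ext φ
    obtain ⟨n, cc, ψ, hrep⟩ := exists_plug1_repr B φ
    have e1 : φ ∈ p ↔ plug1 B ψ cc ∈ p :=
      mem_iff_of_realize_iff hp fun c => (hrep (Sum.elim c id)).symm
    have e1' : φ ∈ p' ↔ plug1 B ψ cc ∈ p' :=
      mem_iff_of_realize_iff hp' fun c => (hrep (Sum.elim c id)).symm
    show φ ∈ p ↔ φ ∈ p'
    rw [e1, e1', ← mkPi_corresponds hp hinv (hreal p hp hinv) n cc ψ,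
      ← mkPi_corresponds hp' hinv' (hreal p' hp' hinv') n cc ψ, hπ]
  · -- surjectivity
    rintro ⟨π, hcoh, hsec⟩
    obtain ⟨a1, ha1⟩ : ∃ a, tp L M B a = π 0 (tp L M B Fin.elim0) :=
      Quotient.exists_rep _
    have hM : Nonempty M := ⟨a1 0⟩
    let p : Set (L.Formula (Fin 1 ⊕ M)) :=
      {φ | ∃ (n : ℕ) (cc : Fin n → M) (ψ : L.Formula (Fin (n + 1) ⊕ ↥B)),
        (∀ v : Fin 1 ⊕ M → M, φ.Realize v ↔ (plug1 B ψ cc).Realize v) ∧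
        π n (tp L M B cc) ∈ fmlSet L M B ψ}
    have hmemp : ∀ φ : L.Formula (Fin 1 ⊕ M), φ ∈ p ↔
        ∃ (n : ℕ) (cc : Fin n → M) (ψ : L.Formula (Fin (n + 1) ⊕ ↥B)),
          (∀ v : Fin 1 ⊕ M → M, φ.Realize v ↔ (plug1 B ψ cc).Realize v) ∧
          π n (tp L M B cc) ∈ fmlSet L M B ψ := fun φ => Iff.rfl
    have hchar : ∀ (n : ℕ) (cc : Fin n → M) (ψ : L.Formula (Fin (n + 1) ⊕ ↥B)),
        (plug1 B ψ cc ∈ p ↔ π n (tp L M B cc) ∈ fmlSet L M B ψ) := by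
      intro n cc ψ
      rw [hmemp]
      constructor
      · rintro ⟨n₁, cc₁, ψ₁, heq, hmem⟩
        exact (pi_mem_congr hcoh hsec cc cc₁ ψ ψ₁ heq).mpr hmem
      · intro hmem
        exact ⟨n, cc, ψ, fun v => Iff.rfl, hmem⟩
    have htop : (⊤ : L.Formula (Fin 1 ⊕ M)) ∈ p := by
      rw [hmemp]
      refine ⟨0, Fin.elim0, ⊤, fun v => ?_, fmlSet_top _⟩
      rw [realize_plug1]
      simp
    have hsat : ∀ φ ∈ p, ∃ c : Fin 1 → M, φ.Realize (Sum.elim c id) := by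
      intro φ hφ
      obtain ⟨n, cc, ψ, heq, hmem⟩ := (hmemp φ).mp hφ
      obtain ⟨a, ha⟩ : ∃ a, tp L M B a = π n (tp L M B cc) := Quotient.exists_rep _
      have hsec' := hsec n (tp L M B cc)
      rw [← ha, subst_tp] at hsec'
      have htype : typEq L M B n (a ∘ Fin.succ) cc := Quotient.exact hsec'
      have hconsa : (Fin.cons (a 0) (a ∘ Fin.succ) : Fin (n + 1) → M) = a := by
        funext i
        refine Fin.cases ?_ (fun j => ?_) i
        · exact Fin.cons_zero _ _
        · exact Fin.cons_succ _ _ _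
      have hex : (exFml ψ).Realize (Sum.elim (a ∘ Fin.succ) Subtype.val) := by
        rw [realize_exFml]
        refine ⟨a 0, ?_⟩
        rw [hconsa]
        rw [← ha, mem_fmlSet_tp] at hmem
        exact hmem
      obtain ⟨x, hx⟩ := (realize_exFml ψ cc).mp ((htype (exFml ψ)).mp hex)
      exact ⟨fun _ => x, (heq _).mpr ((realize_plug1_id ψ cc x).mpr hx)⟩
    have hinfc : ∀ φ φ', φ ∈ p → φ' ∈ p → φ ⊓ φ' ∈ p := by
      intro φ φ' hφ hφ'
      obtain ⟨n, cc, ψ, heq, hmem⟩ := (hmemp φ).mp hφ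
      obtain ⟨n', cc', ψ', heq', hmem'⟩ := (hmemp φ').mp hφ'
      have happ1 : Fin.append cc cc' ∘ Fin.castAdd n' = cc :=
        funext fun i => Fin.append_left cc cc' i
      have happ2 : Fin.append cc cc' ∘ Fin.natAdd n = cc' :=
        funext fun i => Fin.append_right cc cc' i
      rw [hmemp]
      refine ⟨n + n', Fin.append cc cc',
        (ψ.relabel (Sum.map (shift (Fin.castAdd n')) id)) ⊓
          (ψ'.relabel (Sum.map (shift (Fin.natAdd n)) id)), fun v => ?_, ?_⟩
      · rw [Formula.realize_inf, plug1_inf_realize, plug1_shift_realize, plug1_shift_realize,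
          happ1, happ2]
        exact and_congr (heq v) (heq' v)
      · rw [fmlSet_inf]
        constructor
        · refine (pi_mem_subst hcoh (Fin.castAdd n') (Fin.append cc cc') ψ).mp ?_
          rw [happ1]; exact hmem
        · refine (pi_mem_subst hcoh (Fin.natAdd n) (Fin.append cc cc') ψ').mp ?_
          rw [happ2]; exact hmem'
    have hp : IsGlobalType 1 p := by
      constructor
      · -- finite satisfiability
        have hconj : ∀ fs : Finset (L.Formula (Fin 1 ⊕ M)), ↑fs ⊆ p →
            ∃ Φ ∈ p, ∀ c : Fin 1 → M, Φ.Realize (Sum.elim c id) →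
              ∀ φ ∈ fs, φ.Realize (Sum.elim c id) := by
          intro fs
          induction fs using Finset.induction_on with
          | empty =>
            intro _
            exact ⟨⊤, htop, fun c _ φ hφ => absurd hφ (Finset.notMem_empty φ)⟩
          | @insert φ s0 hφs ih =>
            intro hsub
            obtain ⟨Φ, hΦ, hΦimp⟩ := ih fun x hx =>
              hsub (Finset.mem_coe.mpr (Finset.mem_insert_of_mem (Finset.mem_coe.mp hx)))
            refine ⟨φ ⊓ Φ,
              hinfc φ Φ (hsub (Finset.mem_coe.mpr (Finset.mem_insert_self φ s0))) hΦ,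
              fun c hc χ hχ => ?_⟩
            rw [Formula.realize_inf] at hc
            rcases Finset.mem_insert.mp hχ with rfl | hχs
            · exact hc.1
            · exact hΦimp c hc.2 χ hχs
        intro fs hsub
        obtain ⟨Φ, hΦ, himp⟩ := hconj fs hsub
        obtain ⟨c, hc⟩ := hsat Φ hΦ
        exact ⟨c, himp c hc⟩
      · -- completeness
        intro φ
        obtain ⟨n, cc, ψ, hrep⟩ := exists_plug1_repr B φ
        have e1 : φ ∈ p ↔ π n (tp L M B cc) ∈ fmlSet L M B ψ := by
          rw [hmemp]
          constructor
          · rintro ⟨n₁, cc₁, ψ₁, heq₁, hmem₁⟩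
            refine (pi_mem_congr hcoh hsec cc cc₁ ψ ψ₁ fun v => ?_).mpr hmem₁
            rw [hrep v]; exact heq₁ v
          · intro hm; exact ⟨n, cc, ψ, fun v => (hrep v).symm, hm⟩
        have e2 : φ.not ∈ p ↔ π n (tp L M B cc) ∈ fmlSet L M B ψ.not := by
          rw [hmemp]
          constructor
          · rintro ⟨n₁, cc₁, ψ₁, heq₁, hmem₁⟩
            refine (pi_mem_congr hcoh hsec cc cc₁ ψ.not ψ₁ fun v => ?_).mpr hmem₁
            rw [plug1_not, Formula.realize_not, hrep v, ← Formula.realize_not]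
            exact heq₁ v
          · intro hm
            refine ⟨n, cc, ψ.not, fun v => ?_, hm⟩
            rw [plug1_not, Formula.realize_not, Formula.realize_not, hrep v]
        rw [e1, e2, fmlSet_not]
        exact not_not.symm
    have hinvp : Invariant1 B p := by
      intro n ψ c c' h
      rw [hchar n c ψ, hchar n c' ψ, tp_sound h]
    refine ⟨⟨p, hp, hinvp⟩, ?_⟩
    apply Subtype.ext
    show mkPi B p hp hinvp (hreal p hp hinvp) = π
    funext n q
    obtain ⟨cc, rfl⟩ : ∃ cc, tp L M B cc = q := Quotient.exists_rep q
    apply S_ext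
    intro ψ
    rw [mkPi_corresponds hp hinvp (hreal p hp hinvp) n cc ψ, hchar n cc ψ]
  · intro P
    exact mkPi_corresponds P.2.1 P.2.2 (hreal P.1 P.2.1 P.2.2)
end

section
/- If p(x) and q(y) are global types invariant over B, corresponding to coherent families of sections π^p, π^q : S_•(B) → S_•(B)∘[+1], then the composition S_•(B) → S_•(B)∘[+1] → S_•(B)∘[+2] given by π^q followed by the shift π^p[+1] corresponds to the product type p(x) ⊗ q(y), which is again a global type invariant over B. -/
/-!
STATEMENT 10: If `p(x)` and `q(y)` are global types invariant over `B`, corresponding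
to coherent families of sections `π^p, π^q : S_•(B) → S_•(B)∘[+1]`, then the
composition `S_•(B) → S_•(B)∘[+1] → S_•(B)∘[+2]` given by `π^q` followed by the shift
`π^p[+1]` corresponds to the product type `p(x) ⊗ q(y)` — the global `2`-type
determined by: `φ(x,y,c̄) ∈ p ⊗ q` iff `φ(x,c,c̄) ∈ p` for some (any) `c` realizing
`q ↾ Bc̄` — which is again a global type invariant over `B`.
-/

open FirstOrder FirstOrder.Language
open FirstOrder FirstOrder.Language

namespace StoneSpace

variable {L : Language} {M : Type*} [L.Structure M]

/-- A global `2`-type is invariant over `B` if membership of `φ(x, y, c̄)` depends only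
on the type of the parameter tuple `c̄` over `B`. -/
def Invariant2 (B : Set M) (q : Set (L.Formula (Fin 2 ⊕ M))) : Prop :=
  ∀ (n : ℕ) (ψ : L.Formula (Fin (n + 2) ⊕ ↥B)) (c c' : Fin n → M),
    typEq L M B n c c' → (plug2 B ψ c ∈ q ↔ plug2 B ψ c' ∈ q)

/-- The pair `(c₁, c₂)` realizes the restriction of a global `2`-type `q` to
`B ∪ range c̄`. -/
def RealizesRes2 (B : Set M) (q : Set (L.Formula (Fin 2 ⊕ M))) {n : ℕ}
    (cc : Fin n → M) (c₁ c₂ : M) : Prop :=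
  ∀ ψ : L.Formula (Fin (n + 2) ⊕ ↥B),
    plug2 B ψ cc ∈ q →
      ψ.Realize (Sum.elim (Fin.cons c₁ (Fin.cons c₂ cc)) Subtype.val)

/-- Formulas over `B` in `n + 3` free variables with the tuple `c` of parameters
substituted for the last `n` variables. -/
def plug3 (B : Set M) {n : ℕ} (ψ : L.Formula (Fin (n + 3) ⊕ ↥B)) (c : Fin n → M) :
    L.Formula (Fin 3 ⊕ M) :=
  ψ.relabel
    (Sum.elim
      (Fin.cases (Sum.inl 0)
        (Fin.cases (Sum.inl 1) (Fin.cases (Sum.inl 2) (fun j => Sum.inr (c j)))))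
      (fun b => Sum.inr b.val))

variable (L M) in
/-- A family of maps `Sₙ(B) → Sₙ₊₂(B)` corresponds to the global `2`-type `q`. -/
def Corresponds2 (B : Set M) (q : Set (L.Formula (Fin 2 ⊕ M)))
    (ρ : ∀ n, S L M B n → S L M B (n + 2)) : Prop :=
  ∀ (n : ℕ) (cc : Fin n → M) (ψ : L.Formula (Fin (n + 2) ⊕ ↥B)),
    ρ n (tp L M B cc) ∈ fmlSet L M B ψ ↔ plug2 B ψ cc ∈ q

variable (L M) in
/-- A family of maps `Sₙ(B) → Sₙ₊₃(B)` corresponds to the global `3`-type `t`. -/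
def Corresponds3 (B : Set M) (t : Set (L.Formula (Fin 3 ⊕ M)))
    (ρ : ∀ n, S L M B n → S L M B (n + 3)) : Prop :=
  ∀ (n : ℕ) (cc : Fin n → M) (ψ : L.Formula (Fin (n + 3) ⊕ ↥B)),
    ρ n (tp L M B cc) ∈ fmlSet L M B ψ ↔ plug3 B ψ cc ∈ t

/-- The swap of the two free variables of a global `2`-type's formula. -/
def swapFml (φ : L.Formula (Fin 2 ⊕ M)) : L.Formula (Fin 2 ⊕ M) :=
  φ.relabel (Sum.map (Equiv.swap (0 : Fin 2) 1) id)

end StoneSpace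


namespace StoneSpace

section Syntax2
open FirstOrder.Language.BoundedFormula
variable {L : Language} {α β γ : Type*}

theorem relabelAux_comp (f : α → β) (g : β → γ) (k : ℕ) :
    relabelAux (Sum.inl ∘ g) (0 + k) ∘ relabelAux (Sum.inl ∘ f) k
      = Sum.map id (Fin.castLE (Nat.le_of_eq (Nat.zero_add (0+k)).symm))
          ∘ relabelAux (Sum.inl ∘ (g ∘ f)) k := by
  funext x
  rcases x with a | i
  · simp [relabelAux]
  · simp [relabelAux]; rfl

theorem frel_frel (f : α → β) (g : β → γ) :
    ∀ {k} (φ : L.BoundedFormula α k),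
      BoundedFormula.relabel (n := 0) (Sum.inl ∘ g)
        (BoundedFormula.relabel (n := 0) (Sum.inl ∘ f) φ)
        = (BoundedFormula.relabel (n := 0) (Sum.inl ∘ (g ∘ f)) φ).castLE
            (Nat.le_of_eq (Nat.zero_add (0+k)).symm) := by
  intro k φ
  induction φ with
  | falsum => rfl
  | equal t₁ t₂ =>
      simp only [relabel, mapTermRel, castLE, Term.relabel_relabel]
      rw [relabelAux_comp]
  | rel R ts =>
      simp only [relabel, mapTermRel, castLE, Term.relabel_relabel]
      rw [relabelAux_comp]
      congr
      funext i
      simp [Term.relabel_relabel]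
  | imp φ₁ φ₂ ih1 ih2 =>
      rw [relabel_imp, relabel_imp, ih1, ih2, relabel_imp]
      rfl
  | all φ ih =>
      rw [relabel_all, relabel_all, ih, relabel_all]
      rfl

theorem relabel_relabel' (f : α → β) (g : β → γ) (h : α → γ)
    (hfg : ∀ a, g (f a) = h a) (φ : L.Formula α) :
    (φ.relabel f).relabel g = φ.relabel h := by
  have : h = g ∘ f := funext fun a => (hfg a).symm
  subst this
  simpa [Formula.relabel] using frel_frel (L := L) f g φ

variable [DecidableEq α]

theorem term_relabel_id (f : α → α) {k : ℕ} (t : L.Term (α ⊕ Fin k))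
    (h : ∀ x ∈ t.varFinsetLeft, f x = x) :
    Term.relabel (relabelAux (Sum.inl ∘ f) k) t
      = Term.relabel (Sum.map id (Fin.castLE (Nat.le_of_eq (Nat.zero_add k).symm))) t := by
  induction t with
  | var v =>
      rcases v with a | i
      · have := h a (by simp [Term.varFinsetLeft])
        simp [relabelAux, this]
      · simp [relabelAux]
        rfl
  | func F ts ih =>
      simp only [Term.relabel]
      congr 1
      funext i
      exact ih i fun x hx => h x (by
        simp only [Term.varFinsetLeft, Finset.mem_biUnion]
        exact ⟨i, Finset.mem_univ i, hx⟩)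

theorem frel_id (f : α → α) :
    ∀ {k} (φ : L.BoundedFormula α k), (∀ x ∈ φ.freeVarFinset, f x = x) →
      BoundedFormula.relabel (n := 0) (Sum.inl ∘ f) φ
        = φ.castLE (Nat.le_of_eq (Nat.zero_add k).symm) := by
  intro k φ
  induction φ with
  | falsum => intro _; rfl
  | equal t₁ t₂ =>
      intro h
      simp only [relabel, mapTermRel, castLE]
      rw [term_relabel_id f t₁ fun x hx => h x (by simp [hx]),
        term_relabel_id f t₂ fun x hx => h x (by simp [hx])]
  | rel R ts =>
      intro h
      simp only [relabel, mapTermRel, castLE]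
      congr 1
      funext i
      exact term_relabel_id f (ts i) fun x hx => h x (by
        simp only [freeVarFinset, Finset.mem_biUnion]
        exact ⟨i, Finset.mem_univ i, hx⟩)
  | imp φ₁ φ₂ ih1 ih2 =>
      intro h
      rw [relabel_imp, ih1 fun x hx => h x (by simp [hx]), ih2 fun x hx => h x (by simp [hx])]
      rfl
  | all φ ih =>
      intro h
      rw [relabel_all, ih h]
      rfl

theorem relabel_eq_self (f : α → α) (φ : L.Formula α)
    (h : ∀ x ∈ BoundedFormula.freeVarFinset φ, f x = x) : φ.relabel f = φ := by
  simpa [Formula.relabel] using frel_id f φ h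

omit [DecidableEq α] in
theorem relabel_not' (f : α → β) (φ : L.Formula α) :
    (φ.not).relabel f = (φ.relabel f).not :=
  BoundedFormula.relabel_not _ φ

end Syntax2

section Main
variable {L : Language} {M : Type*} [L.Structure M] (B : Set M)

/-- The index map underlying `plug1`. -/
def p1map {n : ℕ} (cc : Fin n → M) : Fin (n + 1) ⊕ ↥B → Fin 1 ⊕ M :=
  Sum.elim (Fin.cases (Sum.inl 0) (fun j => Sum.inr (cc j))) (fun b => Sum.inr b.val)

/-- The index map underlying `plug2`. -/
def p2map {n : ℕ} (cc : Fin n → M) : Fin (n + 2) ⊕ ↥B → Fin 2 ⊕ M :=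
  Sum.elim (Fin.cases (Sum.inl 0) (Fin.cases (Sum.inl 1) (fun j => Sum.inr (cc j))))
    (fun b => Sum.inr b.val)

theorem plug1_def {n : ℕ} (ψ : L.Formula (Fin (n + 1) ⊕ ↥B)) (cc : Fin n → M) :
    plug1 B ψ cc = ψ.relabel (p1map B cc) := rfl

theorem plug2_def {n : ℕ} (ψ : L.Formula (Fin (n + 2) ⊕ ↥B)) (cc : Fin n → M) :
    plug2 B ψ cc = ψ.relabel (p2map B cc) := rfl

theorem plug1_not {n : ℕ} (ψ : L.Formula (Fin (n + 1) ⊕ ↥B)) (cc : Fin n → M) :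
    plug1 B ψ.not cc = (plug1 B ψ cc).not :=
  relabel_not' _ _

theorem plug2_not {n : ℕ} (ψ : L.Formula (Fin (n + 2) ⊕ ↥B)) (cc : Fin n → M) :
    plug2 B ψ.not cc = (plug2 B ψ cc).not :=
  relabel_not' _ _

/-- Substituting an element of `M` for the second free variable of a `2`-ary formula. -/
def subst1 (φ : L.Formula (Fin 2 ⊕ M)) (c : M) : L.Formula (Fin 1 ⊕ M) :=
  φ.relabel (Sum.elim (Fin.cases (Sum.inl 0) (fun _ => Sum.inr c)) Sum.inr)

theorem subst1_plug2 {n : ℕ} (ψ : L.Formula (Fin (n + 2) ⊕ ↥B)) (cc : Fin n → M) (c : M) :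
    subst1 (plug2 B ψ cc) c = plug1 B ψ (Fin.cons c cc) := by
  rw [plug2_def, plug1_def, subst1]
  refine relabel_relabel' _ _ _ ?_ ψ
  rintro (i | b)
  · refine Fin.cases ?_ (fun j => ?_) i
    · show Sum.elim _ _ (p2map B cc (Sum.inl 0)) = p1map B (Fin.cons c cc) (Sum.inl 0)
      rw [p2map, p1map]; simp
    · show Sum.elim _ _ (p2map B cc (Sum.inl j.succ)) = p1map B (Fin.cons c cc) (Sum.inl j.succ)
      rw [p2map, p1map]
      refine Fin.cases ?_ (fun j' => ?_) j
      · simp only [Sum.elim_inl, Fin.cases_succ, Fin.cases_zero, Fin.cons_zero]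
        rfl
      · simp only [Sum.elim_inl, Fin.cases_succ, Fin.cons_succ]
        rfl
  · rfl

end Main
end StoneSpace

namespace StoneSpace
section Main2
variable {L : Language} {M : Type*} [L.Structure M] (B : Set M)

/-- Left weakening map for `plug2` index sets. -/
def wk2L {n n' : ℕ} : Fin (n + 2) ⊕ ↥B → Fin (n + n' + 2) ⊕ ↥B :=
  Sum.map (Fin.cases 0 (Fin.cases 1 (fun j => ((Fin.castAdd n' j).succ.succ)))) id

/-- Right weakening map for `plug2` index sets. -/
def wk2R {n n' : ℕ} : Fin (n' + 2) ⊕ ↥B → Fin (n + n' + 2) ⊕ ↥B :=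
  Sum.map (Fin.cases 0 (Fin.cases 1 (fun j => ((Fin.natAdd n j).succ.succ)))) id

/-- Left weakening map for `plug1` index sets. -/
def wk1L {n n' : ℕ} : Fin (n + 1) ⊕ ↥B → Fin (n + n' + 1) ⊕ ↥B :=
  Sum.map (Fin.cases 0 (fun j => (Fin.castAdd n' j).succ)) id

/-- Right weakening map for `plug1` index sets. -/
def wk1R {n n' : ℕ} : Fin (n' + 1) ⊕ ↥B → Fin (n + n' + 1) ⊕ ↥B :=
  Sum.map (Fin.cases 0 (fun j => (Fin.natAdd n j).succ)) id

theorem plug2_wk2L {n n' : ℕ} (ψ : L.Formula (Fin (n + 2) ⊕ ↥B)) (cc : Fin n → M)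
    (cc' : Fin n' → M) :
    plug2 B (ψ.relabel (wk2L B)) (Fin.append cc cc') = plug2 B ψ cc := by
  rw [plug2_def, plug2_def]
  refine relabel_relabel' _ _ _ ?_ ψ
  rintro (i | b)
  · refine Fin.cases ?_ (fun j => ?_) i
    · rfl
    · refine Fin.cases ?_ (fun j' => ?_) j
      · rfl
      · simp only [wk2L, p2map, Sum.map_inl, Sum.elim_inl, Fin.cases_succ, Fin.append_left]
  · rfl

theorem plug2_wk2R {n n' : ℕ} (ψ : L.Formula (Fin (n' + 2) ⊕ ↥B)) (cc : Fin n → M)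
    (cc' : Fin n' → M) :
    plug2 B (ψ.relabel (wk2R B)) (Fin.append cc cc') = plug2 B ψ cc' := by
  rw [plug2_def, plug2_def]
  refine relabel_relabel' _ _ _ ?_ ψ
  rintro (i | b)
  · refine Fin.cases ?_ (fun j => ?_) i
    · rfl
    · refine Fin.cases ?_ (fun j' => ?_) j
      · rfl
      · simp only [wk2R, p2map, Sum.map_inl, Sum.elim_inl, Fin.cases_succ, Fin.append_right]
  · rfl

theorem plug1_wk1L {n n' : ℕ} (ψ : L.Formula (Fin (n + 1) ⊕ ↥B)) (cc : Fin n → M)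
    (cc' : Fin n' → M) :
    plug1 B (ψ.relabel (wk1L B)) (Fin.append cc cc') = plug1 B ψ cc := by
  rw [plug1_def, plug1_def]
  refine relabel_relabel' _ _ _ ?_ ψ
  rintro (i | b)
  · refine Fin.cases ?_ (fun j => ?_) i
    · rfl
    · simp only [wk1L, p1map, Sum.map_inl, Sum.elim_inl, Fin.cases_succ, Fin.append_left]
  · rfl

theorem plug1_wk1R {n n' : ℕ} (ψ : L.Formula (Fin (n' + 1) ⊕ ↥B)) (cc : Fin n → M)
    (cc' : Fin n' → M) :
    plug1 B (ψ.relabel (wk1R B)) (Fin.append cc cc') = plug1 B ψ cc' := by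
  rw [plug1_def, plug1_def]
  refine relabel_relabel' _ _ _ ?_ ψ
  rintro (i | b)
  · refine Fin.cases ?_ (fun j => ?_) i
    · rfl
    · simp only [wk1R, p1map, Sum.map_inl, Sum.elim_inl, Fin.cases_succ, Fin.append_right]
  · rfl

variable {q : Set (L.Formula (Fin 1 ⊕ M))}

theorem RealizesRes.append_left {n n' : ℕ} {cc : Fin n → M} {cc' : Fin n' → M} {c : M}
    (h : RealizesRes B q (Fin.append cc cc') c) : RealizesRes B q cc c := by
  intro ψ hψ
  have h2 := h (ψ.relabel (wk1L B)) (by rw [plug1_wk1L]; exact hψ)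
  rw [Formula.realize_relabel] at h2
  have he : (Sum.elim (Fin.cons c (Fin.append cc cc')) Subtype.val ∘ wk1L B)
      = (Sum.elim (Fin.cons c cc) Subtype.val : Fin (n + 1) ⊕ ↥B → M) := by
    funext x
    rcases x with i | b
    · refine Fin.cases ?_ (fun j => ?_) i
      · rfl
      · simp only [wk1L, Function.comp_apply, Sum.map_inl, Sum.elim_inl, Fin.cases_succ,
          Fin.cons_succ, Fin.append_left]
    · rfl
  rwa [he] at h2

theorem RealizesRes.append_right {n n' : ℕ} {cc : Fin n → M} {cc' : Fin n' → M} {c : M}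
    (h : RealizesRes B q (Fin.append cc cc') c) : RealizesRes B q cc' c := by
  intro ψ hψ
  have h2 := h (ψ.relabel (wk1R B)) (by rw [plug1_wk1R]; exact hψ)
  rw [Formula.realize_relabel] at h2
  have he : (Sum.elim (Fin.cons c (Fin.append cc cc')) Subtype.val ∘ wk1R B)
      = (Sum.elim (Fin.cons c cc') Subtype.val : Fin (n' + 1) ⊕ ↥B → M) := by
    funext x
    rcases x with i | b
    · refine Fin.cases ?_ (fun j => ?_) i
      · rfl
      · simp only [wk1R, Function.comp_apply, Sum.map_inl, Sum.elim_inl, Fin.cases_succ,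
          Fin.cons_succ, Fin.append_right]
    · rfl
  rwa [he] at h2

theorem typEq_cons (hq : IsGlobalType 1 q) (hqinv : Invariant1 B q) {n : ℕ}
    {cc cc' : Fin n → M} (h : typEq L M B n cc cc') {c c' : M}
    (h1 : RealizesRes B q cc c) (h2 : RealizesRes B q cc' c') :
    typEq L M B (n + 1) (Fin.cons c cc) (Fin.cons c' cc') := by
  intro ψ
  by_cases hmem : plug1 B ψ cc ∈ q
  · exact iff_of_true (h1 ψ hmem) (h2 ψ ((hqinv n ψ cc cc' h).mp hmem))
  · have hnot : plug1 B ψ.not cc ∈ q := by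
      rw [plug1_not]
      by_contra hc
      exact hmem ((hq.2 _).mpr hc)
    have r1 := h1 ψ.not hnot
    have r2 := h2 ψ.not ((hqinv n ψ.not cc cc' h).mp hnot)
    rw [Formula.realize_not] at r1 r2
    exact iff_of_false r1 r2

theorem typEq_refl (n : ℕ) (cc : Fin n → M) : typEq L M B n cc cc := fun _ => Iff.rfl

variable {p : Set (L.Formula (Fin 1 ⊕ M))}

theorem indep (hpinv : Invariant1 B p) (hq : IsGlobalType 1 q) (hqinv : Invariant1 B q)
    (hreal : ∀ (n : ℕ) (cc : Fin n → M), ∃ c : M, RealizesRes B q cc c)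
    {n n' : ℕ} (ψ : L.Formula (Fin (n + 2) ⊕ ↥B)) (ψ' : L.Formula (Fin (n' + 2) ⊕ ↥B))
    {cc : Fin n → M} {cc' : Fin n' → M} {c c' : M}
    (hφ : plug2 B ψ cc = plug2 B ψ' cc')
    (h1 : RealizesRes B q cc c) (h2 : RealizesRes B q cc' c') :
    plug1 B ψ (Fin.cons c cc) ∈ p ↔ plug1 B ψ' (Fin.cons c' cc') ∈ p := by
  obtain ⟨c'', hc''⟩ := hreal (n + n') (Fin.append cc cc')
  have hL := RealizesRes.append_left B hc''
  have hR := RealizesRes.append_right B hc''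
  have t1 := typEq_cons B hq hqinv (typEq_refl B n cc) h1 hL
  have t2 := typEq_cons B hq hqinv (typEq_refl B n' cc') hR h2
  have e : plug1 B ψ (Fin.cons c'' cc) = plug1 B ψ' (Fin.cons c'' cc') := by
    rw [← subst1_plug2, ← subst1_plug2, hφ]
  calc plug1 B ψ (Fin.cons c cc) ∈ p
      ↔ plug1 B ψ (Fin.cons c'' cc) ∈ p := hpinv (n + 1) ψ _ _ t1
    _ ↔ plug1 B ψ' (Fin.cons c'' cc') ∈ p := by rw [e]
    _ ↔ plug1 B ψ' (Fin.cons c' cc') ∈ p := hpinv (n' + 1) ψ' _ _ t2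

end Main2
end StoneSpace

namespace StoneSpace
section Main3
variable {L : Language} {M : Type*} [L.Structure M] (B : Set M)

theorem repr_exists (φ : L.Formula (Fin 2 ⊕ M)) :
    ∃ (n : ℕ) (ψ : L.Formula (Fin (n + 2) ⊕ ↥B)) (cc : Fin n → M), φ = plug2 B ψ cc := by
  classical
  set t := BoundedFormula.freeVarFinset φ with ht
  set s : Finset M := t.biUnion (Sum.elim (fun _ => (∅ : Finset M)) (fun m => {m})) with hs
  set n := s.card with hn
  set e : {x // x ∈ s} ≃ Fin n := s.equivFin with he
  set cc : Fin n → M := fun i => (e.symm i).val with hcc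
  set u : Fin 2 ⊕ M → Fin (n + 2) ⊕ ↥B := Sum.elim
    (fun i => Sum.inl (Fin.cases 0 (fun _ => 1) i))
    (fun m => if h : m ∈ s then Sum.inl ((e ⟨m, h⟩).succ.succ) else Sum.inl 0) with hu
  refine ⟨n, φ.relabel u, cc, ?_⟩
  rw [plug2_def,
    relabel_relabel' u (p2map B cc) (fun x => p2map B cc (u x)) (fun _ => rfl) φ]
  refine (relabel_eq_self _ φ ?_).symm
  intro x hx
  rcases x with i | m
  · refine Fin.cases ?_ (fun j => ?_) i
    · rfl
    · refine Fin.cases ?_ (fun j' => Fin.elim0 j') j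
      rfl
  · have hm : m ∈ s := Finset.mem_biUnion.mpr ⟨Sum.inr m, hx, by simp⟩
    simp only [hu, Sum.elim_inr, dif_pos hm]
    simp only [p2map, Sum.elim_inl, Fin.cases_succ, hcc, Equiv.symm_apply_apply]

theorem merge (l : List (L.Formula (Fin 2 ⊕ M))) :
    ∃ (n : ℕ) (cc : Fin n → M), ∀ φ ∈ l, ∃ ψ, φ = plug2 B ψ cc := by
  induction l with
  | nil => exact ⟨0, Fin.elim0, by simp⟩
  | cons φ l ih =>
      obtain ⟨n, cc, h⟩ := ih
      obtain ⟨n', ψ', cc', hφ⟩ := repr_exists B φ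
      refine ⟨n' + n, Fin.append cc' cc, ?_⟩
      intro χ hχ
      rcases List.mem_cons.mp hχ with rfl | hχ
      · exact ⟨ψ'.relabel (wk2L B), by rw [plug2_wk2L, hφ]⟩
      · obtain ⟨ψ₀, hψ₀⟩ := h χ hχ
        exact ⟨ψ₀.relabel (wk2R B), by rw [plug2_wk2R, hψ₀]⟩

variable (p q : Set (L.Formula (Fin 1 ⊕ M)))

/-- The product type `p ⊗ q`. -/
def prodSet : Set (L.Formula (Fin 2 ⊕ M)) :=
  {φ | ∃ (n : ℕ) (ψ : L.Formula (Fin (n + 2) ⊕ ↥B)) (cc : Fin n → M) (c : M),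
    RealizesRes B q cc c ∧ φ = plug2 B ψ cc ∧ plug1 B ψ (Fin.cons c cc) ∈ p}

variable {p q}
variable (hp : IsGlobalType 1 p) (hpinv : Invariant1 B p)
  (hq : IsGlobalType 1 q) (hqinv : Invariant1 B q)
  (hreal : ∀ (n : ℕ) (cc : Fin n → M), ∃ c : M, RealizesRes B q cc c)

include hpinv hq hqinv hreal in
theorem mem_prodSet_iff {n : ℕ} (ψ : L.Formula (Fin (n + 2) ⊕ ↥B)) (cc : Fin n → M) (c : M)
    (hc : RealizesRes B q cc c) :
    plug2 B ψ cc ∈ prodSet B p q ↔ plug1 B ψ (Fin.cons c cc) ∈ p := by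
  constructor
  · rintro ⟨n', ψ', cc', c', hc', heq, hmem⟩
    exact (indep B hpinv hq hqinv hreal ψ' ψ heq.symm hc' hc).mp hmem
  · intro h
    exact ⟨n, ψ, cc, c, hc, rfl, h⟩

include hp hpinv hq hqinv hreal in
theorem prodSet_finSat (fs : Finset (L.Formula (Fin 2 ⊕ M))) (hfs : ↑fs ⊆ prodSet B p q) :
    ∃ cp : Fin 2 → M, ∀ φ ∈ fs, φ.Realize (Sum.elim cp id) := by
  classical
  obtain ⟨n, cc, hrep⟩ := merge B fs.toList
  obtain ⟨c, hc⟩ := hreal n cc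
  have hmem1 : ∀ φ ∈ fs, subst1 φ c ∈ p := by
    intro φ hφ
    obtain ⟨ψ, hψ⟩ := hrep φ (Finset.mem_toList.mpr hφ)
    have h1 : plug2 B ψ cc ∈ prodSet B p q := hψ ▸ hfs hφ
    have := (mem_prodSet_iff B hpinv hq hqinv hreal ψ cc c hc).mp h1
    rw [hψ, subst1_plug2]
    exact this
  obtain ⟨a, ha⟩ := hp.1 (fs.image (fun φ => subst1 φ c)) (by
    intro χ hχ
    obtain ⟨φ, hφ, rfl⟩ := Finset.mem_image.mp (Finset.mem_coe.mp hχ)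
    exact hmem1 φ hφ)
  refine ⟨Fin.cons (a 0) (fun _ => c), ?_⟩
  intro φ hφ
  have h2 := ha (subst1 φ c) (Finset.mem_image_of_mem _ hφ)
  rw [subst1, Formula.realize_relabel] at h2
  have hfun : (Sum.elim a id ∘ Sum.elim (Fin.cases (Sum.inl 0) (fun _ => Sum.inr c)) Sum.inr :
      Fin 2 ⊕ M → M) = Sum.elim (Fin.cons (a 0) (fun _ => c)) id := by
    funext x
    rcases x with i | m
    · refine Fin.cases ?_ (fun j => ?_) i
      · rfl
      · simp [Fin.cons_succ]
    · rfl
  rwa [hfun] at h2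

include hp hpinv hq hqinv hreal in
theorem prodSet_complete (φ : L.Formula (Fin 2 ⊕ M)) :
    φ ∈ prodSet B p q ↔ φ.not ∉ prodSet B p q := by
  constructor
  · rintro ⟨n, ψ, cc, c, hc, rfl, hmem⟩ hcon
    rcases hcon with ⟨n', ψ', cc', c', hc', heq, hmem'⟩
    rw [← plug2_not] at heq
    have hiff := indep B hpinv hq hqinv hreal ψ.not ψ' heq hc hc'
    have h1 : plug1 B ψ.not (Fin.cons c cc) ∈ p := hiff.mpr hmem'
    rw [plug1_not] at h1
    exact (hp.2 _).mp hmem h1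
  · intro hnot
    obtain ⟨n, ψ, cc, hrep⟩ := repr_exists B φ
    obtain ⟨c, hc⟩ := hreal n cc
    by_cases hmem : plug1 B ψ (Fin.cons c cc) ∈ p
    · exact ⟨n, ψ, cc, c, hc, hrep, hmem⟩
    · exfalso
      apply hnot
      have h1 : plug1 B ψ.not (Fin.cons c cc) ∈ p := by
        rw [plug1_not]
        by_contra hcon
        exact hmem ((hp.2 _).mpr hcon)
      exact ⟨n, ψ.not, cc, c, hc, by rw [hrep, plug2_not], h1⟩

include hpinv hq hqinv hreal in
theorem prodSet_inv : Invariant2 B (prodSet B p q) := by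
  intro n ψ cc cc' h
  obtain ⟨c, hc⟩ := hreal n cc
  obtain ⟨c', hc'⟩ := hreal n cc'
  rw [mem_prodSet_iff B hpinv hq hqinv hreal ψ cc c hc,
    mem_prodSet_iff B hpinv hq hqinv hreal ψ cc' c' hc']
  exact hpinv (n + 1) ψ _ _ (typEq_cons B hq hqinv h hc hc')

end Main3
end StoneSpace

open StoneSpace in
theorem product_of_invariant_types_corresponds_to_composition
    (L : Language) (M : Type*) [L.Structure M] (B : Set M)
    (p q : Set (L.Formula (Fin 1 ⊕ M)))
    (hp : IsGlobalType 1 p) (hpinv : Invariant1 B p)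
    (hq : IsGlobalType 1 q) (hqinv : Invariant1 B q)
    (πp πq : ∀ n, S L M B n → S L M B (n + 1))
    (hpcoh : Coherent L M B πp) (hpsec : IsSectionFamily L M B πp)
    (hqcoh : Coherent L M B πq) (hqsec : IsSectionFamily L M B πq)
    (hpcorr : Corresponds L M B p πp) (hqcorr : Corresponds L M B q πq)
    (hreal : ∀ (n : ℕ) (cc : Fin n → M), ∃ c : M, RealizesRes B q cc c) :
    ∃ pq : Set (L.Formula (Fin 2 ⊕ M)),
      IsGlobalType 2 pq ∧ Invariant2 B pq ∧
      (∀ (n : ℕ) (ψ : L.Formula (Fin (n + 2) ⊕ ↥B)) (cc : Fin n → M) (c : M),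
        RealizesRes B q cc c →
          (plug2 B ψ cc ∈ pq ↔ plug1 B ψ (Fin.cons c cc) ∈ p)) ∧
      Corresponds2 L M B pq (fun n r => πp (n + 1) (πq n r)) := by
  refine ⟨prodSet B p q,
    ⟨prodSet_finSat B hp hpinv hq hqinv hreal, prodSet_complete B hp hpinv hq hqinv hreal⟩,
    prodSet_inv B hpinv hq hqinv hreal,
    fun n ψ cc c hc => mem_prodSet_iff B hpinv hq hqinv hreal ψ cc c hc,
    ?_⟩
  intro n cc ψ
  obtain ⟨d, hd⟩ : ∃ d : Fin (n + 1) → M, tp L M B d = πq n (tp L M B cc) :=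
    Quotient.exists_rep _
  have hsec := hqsec n (tp L M B cc)
  rw [← hd] at hsec
  have hsec' : tp L M B (d ∘ Fin.succ) = tp L M B cc := hsec
  have hte : typEq L M B n (d ∘ Fin.succ) cc := Quotient.exact hsec'
  have hcons : (Fin.cons (d 0) (d ∘ Fin.succ) : Fin (n + 1) → M) = d := by
    funext x
    refine Fin.cases ?_ (fun i => ?_) x
    · rfl
    · simp [Fin.cons_succ]
  have hd0 : RealizesRes B q (d ∘ Fin.succ) (d 0) := by
    intro χ hχ
    have hq1 : plug1 B χ cc ∈ q := (hqinv n χ _ cc hte).mp hχ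
    have h2 : πq n (tp L M B cc) ∈ fmlSet L M B χ := (hqcorr n cc χ).mpr hq1
    rw [← hd] at h2
    have h3 : χ.Realize (Sum.elim d Subtype.val) := h2
    rw [hcons]
    exact h3
  calc πp (n + 1) (πq n (tp L M B cc)) ∈ fmlSet L M B ψ
      ↔ plug1 B ψ d ∈ p := by rw [← hd]; exact hpcorr (n + 1) d ψ
    _ ↔ plug2 B ψ (d ∘ Fin.succ) ∈ prodSet B p q := by
        rw [mem_prodSet_iff B hpinv hq hqinv hreal ψ (d ∘ Fin.succ) (d 0) hd0, hcons]
    _ ↔ plug2 B ψ cc ∈ prodSet B p q :=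
        prodSet_inv B hpinv hq hqinv hreal n ψ (d ∘ Fin.succ) cc hte
end
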